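/- arXiv:2012.07780 — 4 statements merged into one kernel-verified Lean document; each statement's English description precedes it below -/
import Mathlib

section
/- Let Q be an abstract key polynomial for μ and f ∈ K[X] with Q-expansion f = Σ f_i Q^i. Then ε_{μ_Q}(f) = ε_μ(Q) if and only if S_{Q,μ}(f) ≠ {0}, where S_{Q,μ}(f) = {i : μ(f_i Q^i) = μ_Q(f)}. -/
open Polynomial

/-- An additive (Krull) valuation with values in `Γ ∪ {∞}`. -/
structure IsValAdd {R : Type*} [CommRing R] {Γ : Type*} [AddCommGroup Γ] [LinearOrder Γ] [IsOrderedAddMonoid Γ]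
    (v : R → WithTop Γ) : Prop where
  map_mul : ∀ a b, v (a * b) = v a + v b
  map_add : ∀ a b, min (v a) (v b) ≤ v (a + b)
  map_one : v 1 = 0
  map_zero : v 0 = ⊤
  supp : ∀ a, v a = ⊤ → a = 0

/-- The valuation associated to a pair `(a, δ)`:
`ν_{a,δ}(∑ aᵢ (X - a)ⁱ) = min_i (ν aᵢ + i•δ)`. -/
noncomputable def pairVal {K : Type*} [Field K] {Γ : Type*} [AddCommGroup Γ] [LinearOrder Γ] [IsOrderedAddMonoid Γ]
    (ν : K → WithTop Γ) (a : K) (δ : Γ) (f : K[X]) : WithTop Γ :=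
  (Finset.range (f.natDegree + 1)).inf
    fun i => ν ((Polynomial.taylor a f).coeff i) + ((i • δ : Γ) : WithTop Γ)

/-- The coefficients of the `Q`-expansion of a polynomial, by iterated euclidean division. -/
noncomputable def qCoeff {K : Type*} [Field K] (Q : K[X]) : ℕ → K[X] → K[X]
  | 0, f => f %ₘ Q
  | n + 1, f => qCoeff Q n (f /ₘ Q)

/-- The truncation `μ_Q` of `μ` along `Q` : `μ_Q(f) = min_i μ(fᵢ Qⁱ)` over the
`Q`-expansion `f = ∑ fᵢ Qⁱ`. -/
noncomputable def trunc {K : Type*} [Field K] {Γ : Type*} [AddCommGroup Γ] [LinearOrder Γ] [IsOrderedAddMonoid Γ]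
    (μ : K[X] → WithTop Γ) (Q : K[X]) (f : K[X]) : WithTop Γ :=
  (Finset.range (f.natDegree + 1)).inf fun i => μ (qCoeff Q i f * Q ^ i)

/-- `ε_μ(f) < ε_μ(Q)`, stated in cross-multiplied form (valid in the divisible hull). -/
def EpsLt {K : Type*} [Field K] {Γ : Type*} [AddCommGroup Γ] [LinearOrder Γ] [IsOrderedAddMonoid Γ]
    (μ : K[X] → WithTop Γ) (f Q : K[X]) : Prop :=
  ∃ j, 1 ≤ j ∧ μ (hasseDeriv j Q) ≠ ⊤ ∧
    ∀ i, 1 ≤ i → j • μ f + i • μ (hasseDeriv j Q) < i • μ Q + j • μ (hasseDeriv i f)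

/-- `ε_{μ₁}(f) ≤ ε_{μ₂}(g)`, stated in cross-multiplied form. -/
def EpsLE {K L : Type*} [Field K] [Field L] {Γ : Type*} [AddCommGroup Γ] [LinearOrder Γ] [IsOrderedAddMonoid Γ]
    (μ₁ : K[X] → WithTop Γ) (f : K[X]) (μ₂ : L[X] → WithTop Γ) (g : L[X]) : Prop :=
  ∀ i, 1 ≤ i → ∃ j, 1 ≤ j ∧
    j • μ₁ f + i • μ₂ (hasseDeriv j g) ≤ i • μ₂ g + j • μ₁ (hasseDeriv i f)

/-- `Q` is an abstract key polynomial for `μ`. -/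
def IsABKP {K : Type*} [Field K] {Γ : Type*} [AddCommGroup Γ] [LinearOrder Γ] [IsOrderedAddMonoid Γ]
    (μ : K[X] → WithTop Γ) (Q : K[X]) : Prop :=
  Q.Monic ∧ ∀ f : K[X], f ≠ 0 → f.degree < Q.degree → EpsLt μ f Q


section WT
variable {Γ : Type*} [AddCommGroup Γ] [LinearOrder Γ] [IsOrderedAddMonoid Γ]

lemma wt_nsmul_top {n : ℕ} (hn : 1 ≤ n) : n • (⊤ : WithTop Γ) = ⊤ := by
  induction n with
  | zero => omega
  | succ m ih =>
    rcases Nat.eq_or_lt_of_le hn with h | h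
    · simp [← h]
    · rw [succ_nsmul, ih (by omega)]; simp

lemma wt_nsmul_mono (n : ℕ) {a b : WithTop Γ} (h : a ≤ b) : n • a ≤ n • b :=
  nsmul_le_nsmul_right h n

lemma wt_nsmul_lt {n : ℕ} (hn : 1 ≤ n) {a b : WithTop Γ} (h : a < b) : n • a < n • b := by
  lift a to Γ using h.ne_top
  cases b with
  | top => rw [wt_nsmul_top hn]; exact (WithTop.coe_nsmul a n ▸ WithTop.coe_lt_top _)
  | coe b =>
    rw [← WithTop.coe_nsmul, ← WithTop.coe_nsmul, WithTop.coe_lt_coe]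
    exact nsmul_lt_nsmul_right (by omega) (WithTop.coe_lt_coe.mp h)

lemma wt_le_of_nsmul_le {n : ℕ} (hn : 1 ≤ n) {a b : WithTop Γ} (h : n • a ≤ n • b) : a ≤ b := by
  by_contra hab
  exact absurd h (not_le.mpr (wt_nsmul_lt hn (not_le.mp hab)))

lemma wt_lt_of_nsmul_lt {n : ℕ} {a b : WithTop Γ} (h : n • a < n • b) : a < b := by
  by_contra hab
  exact absurd h (not_lt.mpr (wt_nsmul_mono n (not_lt.mp hab)))

lemma wt_add_lt_add {a b c d : WithTop Γ} (h1 : a < b) (h2 : c ≤ d) (hc : c ≠ ⊤) :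
    a + c < b + d := by
  lift a to Γ using h1.ne_top
  lift c to Γ using hc
  cases b with
  | top =>
    simp only [top_add]
    rw [← WithTop.coe_add]
    exact WithTop.coe_lt_top _
  | coe b =>
    have hd' : (b : WithTop Γ) + d = ⊤ ∨ ∃ d' : Γ, d = d' := by
      cases d with
      | top => exact Or.inl (by simp)
      | coe d => exact Or.inr ⟨d, rfl⟩
    rcases hd' with h | ⟨d', rfl⟩
    · rw [h, ← WithTop.coe_add]; exact WithTop.coe_lt_top _
    · rw [← WithTop.coe_add, ← WithTop.coe_add, WithTop.coe_lt_coe]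
      exact add_lt_add_of_lt_of_le (WithTop.coe_lt_coe.mp h1) (WithTop.coe_le_coe.mp h2)

lemma wt_add_le_add {a b c d : WithTop Γ} (h1 : a ≤ b) (h2 : c ≤ d) : a + c ≤ b + d :=
  add_le_add h1 h2

lemma wt_cancel_le {c : WithTop Γ} (hc : c ≠ ⊤) {a b : WithTop Γ} (h : a + c ≤ b + c) : a ≤ b :=
  (WithTop.add_le_add_iff_right hc).mp h

lemma wt_cancel_lt {c : WithTop Γ} (hc : c ≠ ⊤) {a b : WithTop Γ} (h : a + c < b + c) : a < b :=
  (WithTop.add_lt_add_iff_right hc).mp h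

end WT
section Val
variable {K Γ : Type*} [Field K] [AddCommGroup Γ] [LinearOrder Γ] [IsOrderedAddMonoid Γ]
variable {μ : Polynomial K → WithTop Γ} {Q : Polynomial K}

lemma val_eq_top_iff (hμ : IsValAdd μ) {p : K[X]} : μ p = ⊤ ↔ p = 0 :=
  ⟨hμ.supp p, fun h => h ▸ hμ.map_zero⟩

lemma val_ne_top (hμ : IsValAdd μ) {p : K[X]} (hp : p ≠ 0) : μ p ≠ ⊤ :=
  fun h => hp (hμ.supp p h)

lemma val_neg (hμ : IsValAdd μ) (p : K[X]) : μ (-p) = μ p := by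
  have h1 : μ (-1 : K[X]) = 0 := by
    have h := hμ.map_mul (-1) (-1)
    rw [neg_mul_neg, one_mul, hμ.map_one] at h
    cases hm : μ (-1 : K[X]) with
    | top => rw [hm, top_add] at h; exact absurd h.symm (by simp)
    | coe x =>
      rw [hm, ← WithTop.coe_add] at h
      norm_cast at h ⊢
      rcases lt_trichotomy x 0 with hx | hx | hx
      · exact absurd h (ne_of_lt (add_neg hx hx))
      · exact hx
      · exact absurd h (ne_of_gt (add_pos hx hx))
  calc μ (-p) = μ ((-1) * p) := by rw [neg_one_mul]
  _ = μ (-1 : K[X]) + μ p := hμ.map_mul _ _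
  _ = μ p := by rw [h1, zero_add]

lemma val_min_le_sub (hμ : IsValAdd μ) (p q : K[X]) : min (μ p) (μ q) ≤ μ (p - q) := by
  rw [sub_eq_add_neg]
  calc min (μ p) (μ q) = min (μ p) (μ (-q)) := by rw [val_neg hμ]
  _ ≤ μ (p + -q) := hμ.map_add _ _

lemma val_sum_le (hμ : IsValAdd μ) {ι : Type*} (s : Finset ι) (t : ι → K[X]) {V : WithTop Γ}
    (h : ∀ j ∈ s, V ≤ μ (t j)) : V ≤ μ (∑ j ∈ s, t j) := by
  classical
  induction s using Finset.induction with
  | empty => simp [hμ.map_zero]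
  | @insert a s' hj ih =>
    rw [Finset.sum_insert hj]
    refine le_trans ?_ (hμ.map_add _ _)
    exact le_min (h a (Finset.mem_insert_self a s'))
      (ih fun j hjs => h j (Finset.mem_insert_of_mem hjs))

lemma val_sum_lt (hμ : IsValAdd μ) {ι : Type*} (s : Finset ι) (t : ι → K[X]) {V : WithTop Γ}
    (hV : V ≠ ⊤) (h : ∀ j ∈ s, V < μ (t j)) : V < μ (∑ j ∈ s, t j) := by
  classical
  induction s using Finset.induction with
  | empty => simpa [hμ.map_zero] using lt_top_iff_ne_top.mpr hV
  | @insert a s' hj ih =>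
    rw [Finset.sum_insert hj]
    refine lt_of_lt_of_le ?_ (hμ.map_add _ _)
    exact lt_min (h a (Finset.mem_insert_self a s'))
      (ih fun j hjs => h j (Finset.mem_insert_of_mem hjs))

lemma val_pow (hμ : IsValAdd μ) (p : K[X]) (n : ℕ) : μ (p ^ n) = n • μ p := by
  induction n with
  | zero => simpa using hμ.map_one
  | succ m ih => rw [pow_succ, hμ.map_mul, ih, succ_nsmul]

/-- If one term has value exactly `V` and all others strictly bigger, the sum has value `≤ V`. -/
lemma val_min_upper (hμ : IsValAdd μ) {ι : Type*} [DecidableEq ι] (s : Finset ι) (t : ι → K[X])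
    {j₀ : ι} (hj₀ : j₀ ∈ s) {V : WithTop Γ} (hV : V ≠ ⊤) (h₀ : μ (t j₀) = V)
    (hrest : ∀ j ∈ s, j ≠ j₀ → V < μ (t j)) : μ (∑ j ∈ s, t j) ≤ V := by
  by_contra hg
  push_neg at hg
  have hsplit : t j₀ = (∑ j ∈ s, t j) - (∑ j ∈ s.erase j₀, t j) := by
    rw [← Finset.add_sum_erase s t hj₀]; ring
  have h1 : V < μ (∑ j ∈ s.erase j₀, t j) :=
    val_sum_lt hμ _ _ hV fun j hj =>
      hrest j (Finset.mem_of_mem_erase hj) (Finset.ne_of_mem_erase hj)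
  have : V < μ (t j₀) := by
    rw [hsplit]
    exact lt_of_lt_of_le (lt_min hg h1) (val_min_le_sub hμ _ _)
  exact absurd h₀ this.ne'

/- ### `qCoeff` basics -/

lemma qCoeff_zero_poly (Q : K[X]) : ∀ i, qCoeff Q i 0 = 0
  | 0 => by simp [qCoeff]
  | (n+1) => by rw [qCoeff, Polynomial.zero_divByMonic]; exact qCoeff_zero_poly Q n

lemma divMod_add (hQm : Q.Monic) (f g : K[X]) :
    (f + g) /ₘ Q = f /ₘ Q + g /ₘ Q ∧ (f + g) %ₘ Q = f %ₘ Q + g %ₘ Q := by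
  refine Polynomial.div_modByMonic_unique _ _ hQm ⟨?_, ?_⟩
  · have h1 := Polynomial.modByMonic_add_div f Q
    have h2 := Polynomial.modByMonic_add_div g Q
    linear_combination h1 + h2
  · exact lt_of_le_of_lt (Polynomial.degree_add_le _ _)
      (max_lt (Polynomial.degree_modByMonic_lt _ hQm) (Polynomial.degree_modByMonic_lt _ hQm))

lemma qCoeff_add (hQm : Q.Monic) : ∀ i (f g : K[X]),
    qCoeff Q i (f + g) = qCoeff Q i f + qCoeff Q i g
  | 0, f, g => by rw [qCoeff, qCoeff, qCoeff]; exact (divMod_add hQm f g).2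
  | (n+1), f, g => by
    rw [qCoeff, qCoeff, qCoeff, (divMod_add hQm f g).1]
    exact qCoeff_add hQm n _ _

lemma qCoeff_sum (hQm : Q.Monic) {ι : Type*} (s : Finset ι) (t : ι → K[X]) (i : ℕ) :
    qCoeff Q i (∑ j ∈ s, t j) = ∑ j ∈ s, qCoeff Q i (t j) := by
  classical
  induction s using Finset.induction with
  | empty => simpa using qCoeff_zero_poly Q i
  | @insert a s' hj ih =>
    rw [Finset.sum_insert hj, Finset.sum_insert hj, qCoeff_add hQm, ih]

lemma degree_qCoeff_lt (hQm : Q.Monic) : ∀ i (f : K[X]), (qCoeff Q i f).degree < Q.degree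
  | 0, f => Polynomial.degree_modByMonic_lt f hQm
  | (n+1), f => degree_qCoeff_lt hQm n (f /ₘ Q)

lemma qCoeff_eq_zero (hQm : Q.Monic) (hD : 1 ≤ Q.natDegree) :
    ∀ i (f : K[X]), f.natDegree < i → qCoeff Q i f = 0 := by
  intro i
  induction i with
  | zero => exact fun f hf => absurd hf (Nat.not_lt_zero _)
  | succ n ih =>
    intro f hf
    rw [qCoeff]
    by_cases h0 : f /ₘ Q = 0
    · rw [h0]; exact qCoeff_zero_poly Q n
    · refine ih _ ?_
      have hd : (f /ₘ Q).natDegree = f.natDegree - Q.natDegree :=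
        Polynomial.natDegree_divByMonic f hQm
      have : Q.degree ≤ f.degree := by
        by_contra hlt
        exact h0 ((Polynomial.divByMonic_eq_zero_iff hQm).mpr (not_le.mp hlt))
      have : Q.natDegree ≤ f.natDegree := Polynomial.natDegree_le_natDegree this
      omega

lemma sum_qCoeff (hQm : Q.Monic) (hD : 1 ≤ Q.natDegree) :
    ∀ N (f : K[X]), f.natDegree ≤ N →
      (∑ i ∈ Finset.range (N + 1), qCoeff Q i f * Q ^ i) = f := by
  intro N
  induction N with
  | zero =>
    intro f hf
    rw [Finset.range_one, Finset.sum_singleton, pow_zero, mul_one, qCoeff]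
    refine (Polynomial.modByMonic_eq_self_iff hQm).mpr ?_
    have hdeg0 : f.degree ≤ 0 := Polynomial.natDegree_eq_zero_iff_degree_le_zero.mp (by omega)
    have h0 : 0 < Q.degree := Polynomial.natDegree_pos_iff_degree_pos.mp (by omega)
    exact lt_of_le_of_lt hdeg0 h0
  | succ N ih =>
    intro f hf
    rw [Finset.sum_range_succ']
    have hstep : ∀ i, qCoeff Q (i + 1) f = qCoeff Q i (f /ₘ Q) := fun i => rfl
    have hdiv : (f /ₘ Q).natDegree ≤ N := by
      by_cases h0 : f /ₘ Q = 0
      · simp [h0]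
      · have hd : (f /ₘ Q).natDegree = f.natDegree - Q.natDegree :=
          Polynomial.natDegree_divByMonic f hQm
        omega
    calc (∑ i ∈ Finset.range (N + 1), qCoeff Q (i + 1) f * Q ^ (i + 1))
          + qCoeff Q 0 f * Q ^ 0
        = Q * (∑ i ∈ Finset.range (N + 1), qCoeff Q i (f /ₘ Q) * Q ^ i) + f %ₘ Q := by
          rw [Finset.mul_sum]
          congr 1
          · refine Finset.sum_congr rfl fun i _ => ?_
            rw [hstep i, pow_succ]; ring
          · rw [qCoeff, pow_zero, mul_one]
      _ = f := by rw [ih _ hdiv, add_comm]; exact Polynomial.modByMonic_add_div f Q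

end Val
section Trunc
variable {K Γ : Type*} [Field K] [AddCommGroup Γ] [LinearOrder Γ] [IsOrderedAddMonoid Γ]
variable {μ : Polynomial K → WithTop Γ} {Q : Polynomial K}

lemma trunc_le (hμ : IsValAdd μ) (hQm : Q.Monic) (hD : 1 ≤ Q.natDegree) (f : K[X]) (i : ℕ) :
    trunc μ Q f ≤ μ (qCoeff Q i f * Q ^ i) := by
  by_cases hi : i ≤ f.natDegree
  · exact Finset.inf_le (Finset.mem_range.mpr (by omega))
  · rw [qCoeff_eq_zero hQm hD i f (by omega), zero_mul, hμ.map_zero]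
    exact le_top

lemma le_trunc {V : WithTop Γ} {f : K[X]} (h : ∀ i, V ≤ μ (qCoeff Q i f * Q ^ i)) :
    V ≤ trunc μ Q f :=
  Finset.le_inf fun i _ => h i

lemma lt_trunc {V : WithTop Γ} {f : K[X]} (hV : V ≠ ⊤)
    (h : ∀ i, V < μ (qCoeff Q i f * Q ^ i)) : V < trunc μ Q f :=
  (Finset.lt_inf_iff (lt_top_iff_ne_top.mpr hV)).mpr fun i _ => h i

lemma trunc_le_val (hμ : IsValAdd μ) (hQm : Q.Monic) (hD : 1 ≤ Q.natDegree) (f : K[X]) :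
    trunc μ Q f ≤ μ f := by
  conv_rhs => rw [← sum_qCoeff hQm hD f.natDegree f le_rfl]
  exact val_sum_le hμ _ _ fun i _ => trunc_le hμ hQm hD f i

lemma trunc_sum_ge (hμ : IsValAdd μ) (hQm : Q.Monic) (hD : 1 ≤ Q.natDegree)
    {ι : Type*} (s : Finset ι) (t : ι → K[X]) {V : WithTop Γ}
    (h : ∀ j ∈ s, V ≤ trunc μ Q (t j)) : V ≤ trunc μ Q (∑ j ∈ s, t j) := by
  refine le_trunc fun i => ?_
  rw [qCoeff_sum hQm, Finset.sum_mul]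
  exact val_sum_le hμ _ _ fun j hj => le_trans (h j hj) (trunc_le hμ hQm hD (t j) i)

lemma trunc_sum_gt (hμ : IsValAdd μ) (hQm : Q.Monic) (hD : 1 ≤ Q.natDegree)
    {ι : Type*} (s : Finset ι) (t : ι → K[X]) {V : WithTop Γ} (hV : V ≠ ⊤)
    (h : ∀ j ∈ s, V < trunc μ Q (t j)) : V < trunc μ Q (∑ j ∈ s, t j) := by
  refine lt_trunc hV fun i => ?_
  rw [qCoeff_sum hQm, Finset.sum_mul]
  exact val_sum_lt hμ _ _ hV fun j hj =>
    lt_of_lt_of_le (h j hj) (trunc_le hμ hQm hD (t j) i)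

lemma qCoeff_zero_of_deg_lt (hQm : Q.Monic) {f : K[X]} (hdeg : f.degree < Q.degree) :
    qCoeff Q 0 f = f :=
  (Polynomial.modByMonic_eq_self_iff hQm).mpr hdeg

lemma qCoeff_succ_of_deg_lt (hQm : Q.Monic) {f : K[X]} (hdeg : f.degree < Q.degree) (i : ℕ) :
    qCoeff Q (i + 1) f = 0 := by
  show qCoeff Q i (f /ₘ Q) = 0
  rw [(Polynomial.divByMonic_eq_zero_iff hQm).mpr hdeg]
  exact qCoeff_zero_poly Q i

lemma trunc_eq_val_of_deg_lt (hμ : IsValAdd μ) (hQm : Q.Monic) (hD : 1 ≤ Q.natDegree)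
    {f : K[X]} (hdeg : f.degree < Q.degree) : trunc μ Q f = μ f := by
  apply le_antisymm
  · have h := trunc_le hμ hQm hD f 0
    rwa [qCoeff_zero_of_deg_lt hQm hdeg, pow_zero, mul_one] at h
  · refine le_trunc fun i => ?_
    cases i with
    | zero => rw [qCoeff_zero_of_deg_lt hQm hdeg, pow_zero, mul_one]
    | succ i =>
      rw [qCoeff_succ_of_deg_lt hQm hdeg, zero_mul, hμ.map_zero]
      exact le_top

lemma qCoeff_mul_pow (hQm : Q.Monic) :
    ∀ (j i : ℕ) (x : K[X]), qCoeff Q i (x * Q ^ j) = if j ≤ i then qCoeff Q (i - j) x else 0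
  | 0, i, x => by simp
  | (j+1), i, x => by
    cases i with
    | zero =>
      rw [if_neg (by omega)]
      show (x * Q ^ (j+1)) %ₘ Q = 0
      rw [Polynomial.modByMonic_eq_zero_iff_dvd hQm]
      exact ⟨x * Q ^ j, by ring⟩
    | succ i =>
      have hdiv : (x * Q ^ (j+1)) /ₘ Q = x * Q ^ j := by
        rw [show x * Q ^ (j+1) = Q * (x * Q ^ j) by ring]
        exact Polynomial.mul_divByMonic_cancel_left _ hQm
      show qCoeff Q i ((x * Q ^ (j+1)) /ₘ Q) = _
      rw [hdiv, qCoeff_mul_pow hQm j i x]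
      by_cases hji : j ≤ i
      · rw [if_pos hji, if_pos (by omega)]
        congr 1
        omega
      · rw [if_neg hji, if_neg (by omega)]

lemma trunc_mulQ (hμ : IsValAdd μ) (hQm : Q.Monic) (hD : 1 ≤ Q.natDegree) (x : K[X]) :
    μ Q + trunc μ Q x ≤ trunc μ Q (Q * x) := by
  refine le_trunc fun i => ?_
  have hx : Q * x = x * Q ^ 1 := by ring
  cases i with
  | zero =>
    rw [hx, qCoeff_mul_pow hQm 1 0 x, if_neg (by omega), zero_mul, hμ.map_zero]
    exact le_top
  | succ i =>
    rw [hx, qCoeff_mul_pow hQm 1 (i+1) x, if_pos (by omega)]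
    have heq : μ (qCoeff Q (i + 1 - 1) x * Q ^ (i+1))
        = μ Q + μ (qCoeff Q i x * Q ^ i) := by
      rw [show (i + 1 - 1) = i by omega, pow_succ, ← mul_assoc, hμ.map_mul (qCoeff Q i x * Q ^ i) Q,
        add_comm]
    rw [heq]
    exact add_le_add_right (trunc_le hμ hQm hD x i) _

lemma trunc_qpow (hμ : IsValAdd μ) (hQm : Q.Monic) (hD : 1 ≤ Q.natDegree) (s : ℕ) :
    s • μ Q ≤ trunc μ Q (Q ^ s) := by
  induction s with
  | zero =>
    rw [pow_zero, trunc_eq_val_of_deg_lt hμ hQm hD, hμ.map_one, zero_smul]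
    rw [Polynomial.degree_one]
    exact Polynomial.natDegree_pos_iff_degree_pos.mp (by omega)
  | succ s ih =>
    rw [pow_succ, mul_comm, succ_nsmul, add_comm]
    exact le_trans (add_le_add_right ih _) (trunc_mulQ hμ hQm hD (Q ^ s))
end Trunc
section Slope
variable {Γ : Type*} [AddCommGroup Γ] [LinearOrder Γ] [IsOrderedAddMonoid Γ]

lemma wt_nsmul_ne_top {x : WithTop Γ} (hx : x ≠ ⊤) (n : ℕ) : n • x ≠ ⊤ := by
  lift x to Γ using hx
  rw [← WithTop.coe_nsmul]
  exact WithTop.coe_ne_top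

lemma wt_eq_top_of_nsmul {x : WithTop Γ} {n : ℕ} (h : n • x = ⊤) : x = ⊤ :=
  by_contra fun hx => (wt_nsmul_ne_top hx n) h

lemma wt_slope_le_trans {n m k : ℕ} (hm : 1 ≤ m)
    {av adv bv bdv cv cdv : WithTop Γ} (hbv : bv ≠ ⊤) (hbdv : bdv ≠ ⊤)
    (h1 : m • av + n • bdv ≤ n • bv + m • adv)
    (h2 : k • bv + m • cdv ≤ m • cv + k • bdv) :
    k • av + n • cdv ≤ n • cv + k • adv := by
  have S1 : k • (m • av + n • bdv) ≤ k • (n • bv + m • adv) := wt_nsmul_mono k h1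
  have S2 : n • (k • bv + m • cdv) ≤ n • (m • cv + k • bdv) := wt_nsmul_mono n h2
  have SUM := add_le_add S1 S2
  rw [smul_add, smul_add, smul_add, smul_add, smul_smul, smul_smul, smul_smul, smul_smul,
    smul_smul, smul_smul, smul_smul, smul_smul] at SUM
  have E1 : (k*m)•av + (k*n)•bdv + ((n*k)•bv + (n*m)•cdv)
      = ((k*m)•av + (n*m)•cdv) + ((k*n)•bv + (k*n)•bdv) := by
    rw [Nat.mul_comm n k]; abel
  have E2 : (k*n)•bv + (k*m)•adv + ((n*m)•cv + (n*k)•bdv)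
      = ((n*m)•cv + (k*m)•adv) + ((k*n)•bv + (k*n)•bdv) := by
    rw [Nat.mul_comm n k]; abel
  rw [E1, E2] at SUM
  have hfin : (k*n)•bv + (k*n)•bdv ≠ ⊤ :=
    WithTop.add_ne_top.mpr ⟨wt_nsmul_ne_top hbv _, wt_nsmul_ne_top hbdv _⟩
  have SUM2 := wt_cancel_le hfin SUM
  have E3 : (k*m)•av + (n*m)•cdv = m • (k • av + n • cdv) := by
    rw [smul_add, smul_smul, smul_smul, Nat.mul_comm m k, Nat.mul_comm m n]
  have E4 : (n*m)•cv + (k*m)•adv = m • (n • cv + k • adv) := by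
    rw [smul_add, smul_smul, smul_smul, Nat.mul_comm m k, Nat.mul_comm m n]
  rw [E3, E4] at SUM2
  exact wt_le_of_nsmul_le hm SUM2

lemma wt_slope_lt_trans {n m k : ℕ} (hm : 1 ≤ m) (hk : 1 ≤ k)
    {av adv bv bdv cv cdv : WithTop Γ} (hbv : bv ≠ ⊤) (hbdv : bdv ≠ ⊤) (hcdv : cdv ≠ ⊤)
    (h1 : m • av + n • bdv < n • bv + m • adv)
    (h2 : k • bv + m • cdv ≤ m • cv + k • bdv) :
    k • av + n • cdv < n • cv + k • adv := by
  have S1 : k • (m • av + n • bdv) < k • (n • bv + m • adv) := wt_nsmul_lt hk h1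
  have S2 : n • (k • bv + m • cdv) ≤ n • (m • cv + k • bdv) := wt_nsmul_mono n h2
  have hC : n • (k • bv + m • cdv) ≠ ⊤ :=
    wt_nsmul_ne_top (WithTop.add_ne_top.mpr ⟨wt_nsmul_ne_top hbv _, wt_nsmul_ne_top hcdv _⟩) n
  have SUM := wt_add_lt_add S1 S2 hC
  rw [smul_add, smul_add, smul_add, smul_add, smul_smul, smul_smul, smul_smul, smul_smul,
    smul_smul, smul_smul, smul_smul, smul_smul] at SUM
  have E1 : (k*m)•av + (k*n)•bdv + ((n*k)•bv + (n*m)•cdv)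
      = ((k*m)•av + (n*m)•cdv) + ((k*n)•bv + (k*n)•bdv) := by
    rw [Nat.mul_comm n k]; abel
  have E2 : (k*n)•bv + (k*m)•adv + ((n*m)•cv + (n*k)•bdv)
      = ((n*m)•cv + (k*m)•adv) + ((k*n)•bv + (k*n)•bdv) := by
    rw [Nat.mul_comm n k]; abel
  rw [E1, E2] at SUM
  have hfin : (k*n)•bv + (k*n)•bdv ≠ ⊤ :=
    WithTop.add_ne_top.mpr ⟨wt_nsmul_ne_top hbv _, wt_nsmul_ne_top hbdv _⟩
  have SUM2 := wt_cancel_lt hfin SUM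
  have E3 : (k*m)•av + (n*m)•cdv = m • (k • av + n • cdv) := by
    rw [smul_add, smul_smul, smul_smul, Nat.mul_comm m k, Nat.mul_comm m n]
  have E4 : (n*m)•cv + (k*m)•adv = m • (n • cv + k • adv) := by
    rw [smul_add, smul_smul, smul_smul, Nat.mul_comm m k, Nat.mul_comm m n]
  rw [E3, E4] at SUM2
  exact wt_lt_of_nsmul_lt SUM2

end Slope

lemma exists_rel_max {α : Type*} [DecidableEq α] (R : α → α → Prop) (s : Finset α)
    (hs : s.Nonempty)
    (total : ∀ a ∈ s, ∀ b ∈ s, R a b ∨ R b a)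
    (htrans : ∀ a ∈ s, ∀ b ∈ s, ∀ c ∈ s, R a b → R b c → R a c) :
    ∃ m ∈ s, ∀ a ∈ s, R a m := by
  classical
  induction s using Finset.induction with
  | empty => exact absurd hs (by simp)
  | @insert a s' ha ih =>
    by_cases hs' : s'.Nonempty
    · obtain ⟨m', hm's, hm'⟩ := ih hs'
        (fun x hx y hy => total x (Finset.mem_insert_of_mem hx) y (Finset.mem_insert_of_mem hy))
        (fun x hx y hy z hz => htrans x (Finset.mem_insert_of_mem hx)
          y (Finset.mem_insert_of_mem hy) z (Finset.mem_insert_of_mem hz))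
      have hmem : m' ∈ insert a s' := Finset.mem_insert_of_mem hm's
      have hamem : a ∈ insert a s' := Finset.mem_insert_self a s'
      rcases total a hamem m' hmem with h | h
      · exact ⟨m', hmem, fun x hx => by
          rcases Finset.mem_insert.mp hx with rfl | hx'
          · exact h
          · exact hm' x hx'⟩
      · refine ⟨a, hamem, fun x hx => ?_⟩
        rcases Finset.mem_insert.mp hx with rfl | hx'
        · rcases total x hamem x hamem with h' | h' <;> exact h'
        · exact htrans x (Finset.mem_insert_of_mem hx') m' hmem a hamem (hm' x hx') h
    · rw [Finset.not_nonempty_iff_eq_empty] at hs'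
      subst hs'
      refine ⟨a, Finset.mem_insert_self a _, fun x hx => ?_⟩
      rcases Finset.mem_insert.mp hx with rfl | hx'
      · rcases total x (Finset.mem_insert_self x _) x (Finset.mem_insert_self x _) with h | h <;>
          exact h
      · exact absurd hx' (by simp)

section GoodB
variable {K Γ : Type*} [Field K] [AddCommGroup Γ] [LinearOrder Γ] [IsOrderedAddMonoid Γ]
variable {μ : Polynomial K → WithTop Γ} {Q : Polynomial K}

/-- `b` is a (largest) index realizing `ε_μ(Q)`. -/
structure GoodB (μ : Polynomial K → WithTop Γ) (Q : Polynomial K) (b : ℕ) : Prop where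
  one_le : 1 ≤ b
  ne_top : μ (hasseDeriv b Q) ≠ ⊤
  hmax : ∀ l, 1 ≤ l → b • μ Q + l • μ (hasseDeriv b Q) ≤ l • μ Q + b • μ (hasseDeriv l Q)
  hmax_lt : ∀ l, b < l → b • μ Q + l • μ (hasseDeriv b Q) < l • μ Q + b • μ (hasseDeriv l Q)

lemma hasseDeriv_natDegree_monic (hQm : Q.Monic) : hasseDeriv Q.natDegree Q = 1 := by
  ext n
  rw [Polynomial.hasseDeriv_coeff]
  cases n with
  | zero =>
    rw [Nat.zero_add, Nat.choose_self, Polynomial.coeff_one]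
    simp [Polynomial.Monic.coeff_natDegree hQm]
  | succ n =>
    rw [Polynomial.coeff_eq_zero_of_natDegree_lt (by omega), Polynomial.coeff_one]
    simp

lemma exists_goodB (hμ : IsValAdd μ) (hQm : Q.Monic) (hD : 1 ≤ Q.natDegree) :
    ∃ b, GoodB μ Q b := by
  have hQtop : μ Q ≠ ⊤ := val_ne_top hμ hQm.ne_zero
  set D := Q.natDegree with hDdef
  have hDtop : μ (hasseDeriv D Q) ≠ ⊤ := by
    rw [hasseDeriv_natDegree_monic hQm, hμ.map_one]
    simp
  set R : ℕ → ℕ → Prop :=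
    fun l m => m • μ Q + l • μ (hasseDeriv m Q) ≤ l • μ Q + m • μ (hasseDeriv l Q) with hR
  have htot : ∀ a ∈ Finset.Icc 1 D, ∀ b ∈ Finset.Icc 1 D, R a b ∨ R b a := by
    intro a _ b _
    exact le_total _ _
  have htrans : ∀ a ∈ Finset.Icc 1 D, ∀ b ∈ Finset.Icc 1 D, ∀ c ∈ Finset.Icc 1 D,
      R a b → R b c → R a c := by
    intro a ha b hb c hc h1 h2
    rw [Finset.mem_Icc] at ha hb hc
    have h1' : b • μ Q + a • μ (hasseDeriv b Q) ≤ a • μ Q + b • μ (hasseDeriv a Q) := h1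
    have h2' : c • μ Q + b • μ (hasseDeriv c Q) ≤ b • μ Q + c • μ (hasseDeriv b Q) := h2
    by_cases hbtop : μ (hasseDeriv b Q) = ⊤
    · have h1'' : (⊤ : WithTop Γ) ≤ a • μ Q + b • μ (hasseDeriv a Q) := by
        calc (⊤ : WithTop Γ) = b • μ Q + a • μ (hasseDeriv b Q) := by
              rw [hbtop, wt_nsmul_top ha.1, add_top]
        _ ≤ _ := h1'
      have hatop : μ (hasseDeriv a Q) = ⊤ := by
        rcases WithTop.add_eq_top.mp (top_le_iff.mp h1'') with h | h
        · exact absurd h (wt_nsmul_ne_top hQtop a)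
        · exact wt_eq_top_of_nsmul h
      show c • μ Q + a • μ (hasseDeriv c Q) ≤ a • μ Q + c • μ (hasseDeriv a Q)
      rw [hatop, wt_nsmul_top hc.1, add_top]
      exact le_top
    · exact wt_slope_le_trans hb.1 hQtop hbtop h1' h2'
  obtain ⟨b, hbmem, hbmax⟩ := exists_rel_max R (Finset.Icc 1 D)
    ⟨1, Finset.mem_Icc.mpr ⟨le_refl 1, hD⟩⟩ htot htrans
  -- take the largest element of the argmax set
  haveI : DecidablePred (fun m => ∀ l ∈ Finset.Icc 1 D, R l m) :=
    fun _ => Classical.propDecidable _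
  set A : Finset ℕ := (Finset.Icc 1 D).filter (fun m => ∀ l ∈ Finset.Icc 1 D, R l m) with hA
  have hAne : A.Nonempty := ⟨b, Finset.mem_filter.mpr ⟨hbmem, hbmax⟩⟩
  set b₀ := A.max' hAne with hb₀
  have hb₀A : b₀ ∈ A := A.max'_mem hAne
  have hb₀Icc : b₀ ∈ Finset.Icc 1 D := (Finset.mem_filter.mp hb₀A).1
  have hb₀max : ∀ l ∈ Finset.Icc 1 D, R l b₀ := (Finset.mem_filter.mp hb₀A).2
  rw [Finset.mem_Icc] at hb₀Icc
  have hb₀top : μ (hasseDeriv b₀ Q) ≠ ⊤ := by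
    intro htop
    have h : b₀ • μ Q + D • μ (hasseDeriv b₀ Q) ≤ D • μ Q + b₀ • μ (hasseDeriv D Q) :=
      hb₀max D (Finset.mem_Icc.mpr ⟨hD, le_refl D⟩)
    rw [htop, wt_nsmul_top hD, add_top, top_le_iff, WithTop.add_eq_top] at h
    rcases h with h | h
    · exact wt_nsmul_ne_top hQtop D h
    · exact wt_nsmul_ne_top hDtop b₀ h
  -- maximality for all `l ≥ 1`
  have hmaxall : ∀ l, 1 ≤ l → b₀ • μ Q + l • μ (hasseDeriv b₀ Q)
      ≤ l • μ Q + b₀ • μ (hasseDeriv l Q) := by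
    intro l hl
    by_cases hlD : l ≤ D
    · exact hb₀max l (Finset.mem_Icc.mpr ⟨hl, hlD⟩)
    · rw [Polynomial.hasseDeriv_eq_zero_of_lt_natDegree Q l (by omega), hμ.map_zero,
        wt_nsmul_top hb₀Icc.1, add_top]
      exact le_top
  refine ⟨b₀, hb₀Icc.1, hb₀top, hmaxall, ?_⟩
  intro l hl
  rw [lt_iff_not_ge]
  intro hle
  by_cases hlD : l ≤ D
  · -- then `l ∈ A`, contradicting maximality of `b₀`
    have hlA : l ∈ A := by
      refine Finset.mem_filter.mpr ⟨Finset.mem_Icc.mpr ⟨by omega, hlD⟩, fun x hx => ?_⟩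
      exact htrans x hx b₀ (Finset.mem_Icc.mpr hb₀Icc) l (Finset.mem_Icc.mpr ⟨by omega, hlD⟩)
        (hb₀max x hx) hle
    have := Finset.le_max' A l hlA
    omega
  · rw [Polynomial.hasseDeriv_eq_zero_of_lt_natDegree Q l (by omega), hμ.map_zero,
      wt_nsmul_top hb₀Icc.1, add_top, top_le_iff, WithTop.add_eq_top] at hle
    rcases hle with h | h
    · exact wt_nsmul_ne_top hQtop b₀ h
    · exact wt_nsmul_ne_top hb₀top l h

lemma star_lt (hμ : IsValAdd μ) (hQ : IsABKP μ Q) {b : ℕ} (hb : GoodB μ Q b)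
    {c : K[X]} (hc : c ≠ 0) (hdeg : c.degree < Q.degree) {k : ℕ} (hk : 1 ≤ k) :
    b • μ c + k • μ (hasseDeriv b Q) < k • μ Q + b • μ (hasseDeriv k c) := by
  obtain ⟨j, hj1, hjtop, hjlt⟩ := hQ.2 c hc hdeg
  exact wt_slope_lt_trans hj1 hb.one_le (val_ne_top hμ hQ.1.ne_zero) hjtop hb.ne_top
    (hjlt k hk) (hb.hmax j hj1)

lemma star_le (hμ : IsValAdd μ) (hQ : IsABKP μ Q) {b : ℕ} (hb : GoodB μ Q b)
    {c : K[X]} (hdeg : c.degree < Q.degree) (k : ℕ) :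
    b • μ c + k • μ (hasseDeriv b Q) ≤ k • μ Q + b • μ (hasseDeriv k c) := by
  by_cases hc : c = 0
  · subst hc
    rw [map_zero, hμ.map_zero, wt_nsmul_top hb.one_le, add_top]
    exact le_top
  · cases k with
    | zero =>
      rw [Polynomial.hasseDeriv_zero']
      simp
    | succ k => exact (star_lt hμ hQ hb hc hdeg (by omega)).le

lemma base_le (hμ : IsValAdd μ) {b : ℕ} (hb : GoodB μ Q b) (k : ℕ) :
    b • μ Q + k • μ (hasseDeriv b Q) ≤ k • μ Q + b • μ (hasseDeriv k Q) := by
  cases k with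
  | zero => rw [Polynomial.hasseDeriv_zero']; simp
  | succ k => exact hb.hmax _ (by omega)

end GoodB
section Crux
variable {K Γ : Type*} [Field K] [AddCommGroup Γ] [LinearOrder Γ] [IsOrderedAddMonoid Γ]
variable {μ : Polynomial K → WithTop Γ} {Q : Polynomial K}

lemma val_sum_exists (hμ : IsValAdd μ) {ι : Type*} (s : Finset ι) (hs : s.Nonempty)
    (t : ι → K[X]) : ∃ j ∈ s, μ (t j) ≤ μ (∑ j ∈ s, t j) := by
  obtain ⟨j, hj, hji⟩ := Finset.exists_mem_eq_inf s hs (fun j => μ (t j))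
  exact ⟨j, hj, by
    rw [← hji]
    exact val_sum_le hμ s t fun x hx => Finset.inf_le hx⟩

lemma trunc_sum_exists (hμ : IsValAdd μ) (hQm : Q.Monic) (hD : 1 ≤ Q.natDegree)
    {ι : Type*} (s : Finset ι) (hs : s.Nonempty) (t : ι → K[X]) :
    ∃ j ∈ s, trunc μ Q (t j) ≤ trunc μ Q (∑ j ∈ s, t j) := by
  obtain ⟨j, hj, hji⟩ := Finset.exists_mem_eq_inf s hs (fun j => trunc μ Q (t j))
  exact ⟨j, hj, by
    rw [← hji]
    exact trunc_sum_ge hμ hQm hD s t fun x hx => Finset.inf_le hx⟩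

lemma trunc_zero (hμ : IsValAdd μ) : trunc μ Q 0 = ⊤ := by
  apply top_le_iff.mp
  refine Finset.le_inf fun i _ => ?_
  rw [qCoeff_zero_poly, zero_mul, hμ.map_zero]

/-- Hasse derivatives of a polynomial of degree `< deg Q` stay of degree `< deg Q`. -/
lemma deriv_small {c : K[X]} (hQ0 : Q ≠ 0) (hc : c.degree < Q.degree) (k : ℕ) :
    (hasseDeriv k c).degree < Q.degree := by
  by_cases h0 : hasseDeriv k c = 0
  · rw [h0, Polynomial.degree_zero]
    exact Ne.bot_lt fun hbot => hQ0 (Polynomial.degree_eq_bot.mp hbot)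
  · have hc0 : c ≠ 0 := fun h => h0 (by rw [h, map_zero])
    have h1 : (hasseDeriv k c).natDegree ≤ c.natDegree :=
      le_trans (Polynomial.natDegree_hasseDeriv_le c k) (Nat.sub_le _ _)
    have h2 : c.natDegree < Q.natDegree := Polynomial.natDegree_lt_natDegree hc0 hc
    exact Polynomial.degree_lt_degree (by omega)

lemma crux (hμ : IsValAdd μ) (hQ : IsABKP μ Q) (hD : 1 ≤ Q.natDegree)
    {b : ℕ} (hb : GoodB μ Q b) {g h : K[X]} (hg : g.degree < Q.degree)
    (hh : h.degree < Q.degree) (i : ℕ) :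
    μ g + μ h ≤ μ (qCoeff Q i (g * h) * Q ^ i) := by
  classical
  have hQm := hQ.1
  have hQ0 : Q ≠ 0 := hQm.ne_zero
  have hQtop : μ Q ≠ ⊤ := val_ne_top hμ hQ0
  have hβtop : μ (hasseDeriv b Q) ≠ ⊤ := hb.ne_top
  by_cases hg0 : g = 0
  · subst hg0
    rw [zero_mul, qCoeff_zero_poly, zero_mul, hμ.map_zero]
    exact le_top
  by_cases hh0 : h = 0
  · subst hh0
    rw [mul_zero, qCoeff_zero_poly, zero_mul, hμ.map_zero]
    exact le_top
  have hgh0 : g * h ≠ 0 := mul_ne_zero hg0 hh0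
  set s := (g * h) /ₘ Q with hs
  set r := (g * h) %ₘ Q with hr
  have hW : μ (g * h) = μ g + μ h := hμ.map_mul g h
  have hsdeg : s.degree < Q.degree := by
    by_cases hs0 : s = 0
    · rw [hs0, Polynomial.degree_zero]
      exact Ne.bot_lt fun hbot => hQ0 (Polynomial.degree_eq_bot.mp hbot)
    · have h1 : s.natDegree = (g * h).natDegree - Q.natDegree :=
        Polynomial.natDegree_divByMonic (g * h) hQm
      have h2 : (g * h).natDegree = g.natDegree + h.natDegree :=
        Polynomial.natDegree_mul hg0 hh0
      have h3 : g.natDegree < Q.natDegree := Polynomial.natDegree_lt_natDegree hg0 hg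
      have h4 : h.natDegree < Q.natDegree := Polynomial.natDegree_lt_natDegree hh0 hh
      exact Polynomial.degree_lt_degree (by omega)
  have hrdeg : r.degree < Q.degree := Polynomial.degree_modByMonic_lt _ hQm
  have hreq : r = g * h - Q * s := by
    have h0 := Polynomial.modByMonic_add_div (g * h) Q
    rw [← hs, ← hr] at h0
    linear_combination h0
  have hQseq : Q * s = g * h - r := by rw [hreq]; ring
  -- KEY : μ g + μ h ≤ μ s + μ Q
  have KEY : μ g + μ h ≤ μ s + μ Q := by
    by_contra hk
    have hlt : μ s + μ Q < μ g + μ h := not_le.mp hk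
    have hs0 : s ≠ 0 := by
      intro h0
      rw [h0, hμ.map_zero, top_add] at hlt
      exact not_top_lt hlt
    have hstop : μ s ≠ ⊤ := val_ne_top hμ hs0
    have hQs : μ (Q * s) = μ Q + μ s := hμ.map_mul Q s
    have hQsW : μ (Q * s) < μ (g * h) := by rw [hQs, hW, add_comm (μ Q)]; exact hlt
    have hup : μ r ≤ μ (Q * s) := by
      have h2 : min (μ (g * h)) (μ r) ≤ μ (Q * s) := by
        rw [hQseq]; exact val_min_le_sub hμ _ _
      rcases min_le_iff.mp h2 with hx | hx
      · exact absurd (lt_of_le_of_lt hx hQsW) (lt_irrefl _)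
      · exact hx
    have hlow : μ (Q * s) ≤ μ r := by
      have h2 : min (μ (g * h)) (μ (Q * s)) ≤ μ r := by
        rw [hreq]; exact val_min_le_sub hμ _ _
      rcases min_le_iff.mp h2 with hx | hx
      · exact le_trans hQsW.le hx
      · exact hx
    have hrval : μ r = μ Q + μ s := le_antisymm (hQs ▸ hup) (hQs ▸ hlow)
    have hr0 : r ≠ 0 := by
      intro h0
      rw [h0, hμ.map_zero] at hrval
      exact WithTop.add_ne_top.mpr ⟨hQtop, hstop⟩ hrval.symm
    set V₀ : WithTop Γ := μ (hasseDeriv b Q) + μ s with hV₀def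
    have hV₀ : V₀ ≠ ⊤ := WithTop.add_ne_top.mpr ⟨hβtop, hstop⟩
    -- STEP1 : μ (∂_b (Q*s)) ≤ V₀
    have STEP1 : μ (hasseDeriv b (Q * s)) ≤ V₀ := by
      rw [Polynomial.hasseDeriv_mul (k := b) Q s]
      refine val_min_upper hμ _ _ (j₀ := (b, 0))
        (Finset.HasAntidiagonal.mem_antidiagonal.mpr (by omega)) hV₀ ?_ ?_
      · rw [Polynomial.hasseDeriv_zero', hμ.map_mul]
      · rintro ⟨k, m⟩ hmem hne
        have hkm : k + m = b := Finset.HasAntidiagonal.mem_antidiagonal.mp hmem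
        have hm1 : 1 ≤ m := by
          rcases Nat.eq_zero_or_pos m with h0 | h0
          · exact absurd (by simp [h0]; omega : (k, m) = (b, 0)) hne
          · omega
        by_cases hds : hasseDeriv m s = 0
        · rw [hds, mul_zero, hμ.map_zero]
          exact lt_top_iff_ne_top.mpr hV₀
        · have S := star_lt hμ hQ hb hs0 hsdeg hm1
          have B := base_le hμ hb k
          have comb := wt_add_lt_add S B
            (WithTop.add_ne_top.mpr ⟨wt_nsmul_ne_top hQtop b, wt_nsmul_ne_top hβtop k⟩)
          have hmk : m + k = b := by omega
          have eL : (b • μ s + m • μ (hasseDeriv b Q)) + (b • μ Q + k • μ (hasseDeriv b Q))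
              = b • V₀ + b • μ Q := by
            calc (b • μ s + m • μ (hasseDeriv b Q)) + (b • μ Q + k • μ (hasseDeriv b Q))
                = (b • μ s + b • μ Q) + (m + k) • μ (hasseDeriv b Q) := by
                  rw [add_nsmul]; abel
            _ = b • V₀ + b • μ Q := by rw [hmk, hV₀def, smul_add]; try abel
          have eR : (m • μ Q + b • μ (hasseDeriv m s)) + (k • μ Q + b • μ (hasseDeriv k Q))
              = b • μ (hasseDeriv k Q * hasseDeriv m s) + b • μ Q := by
            calc (m • μ Q + b • μ (hasseDeriv m s)) + (k • μ Q + b • μ (hasseDeriv k Q))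
                = (b • μ (hasseDeriv m s) + b • μ (hasseDeriv k Q)) + (m + k) • μ Q := by
                  rw [add_nsmul]; abel
            _ = _ := by rw [hmk, hμ.map_mul, smul_add]; try abel
          rw [eL, eR] at comb
          exact wt_lt_of_nsmul_lt (wt_cancel_lt (wt_nsmul_ne_top hQtop b) comb)
    -- STEP2 : V₀ < μ (∂_b (g*h))
    have STEP2 : V₀ < μ (hasseDeriv b (g * h)) := by
      rw [Polynomial.hasseDeriv_mul (k := b) g h]
      refine val_sum_lt hμ _ _ hV₀ ?_
      rintro ⟨k, m⟩ hmem
      have hkm : k + m = b := Finset.HasAntidiagonal.mem_antidiagonal.mp hmem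
      have Sg := star_le hμ hQ hb hg k
      have Sh := star_le hμ hQ hb hh m
      have comb := add_le_add Sg Sh
      have eL : (b • μ g + k • μ (hasseDeriv b Q)) + (b • μ h + m • μ (hasseDeriv b Q))
          = b • (μ g + μ h) + b • μ (hasseDeriv b Q) := by
        calc (b • μ g + k • μ (hasseDeriv b Q)) + (b • μ h + m • μ (hasseDeriv b Q))
            = (b • μ g + b • μ h) + (k + m) • μ (hasseDeriv b Q) := by
              rw [add_nsmul]; abel
        _ = _ := by rw [hkm, smul_add]; try abel
      have eR : (k • μ Q + b • μ (hasseDeriv k g)) + (m • μ Q + b • μ (hasseDeriv m h))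
          = b • μ (hasseDeriv k g * hasseDeriv m h) + b • μ Q := by
        calc (k • μ Q + b • μ (hasseDeriv k g)) + (m • μ Q + b • μ (hasseDeriv m h))
            = (b • μ (hasseDeriv k g) + b • μ (hasseDeriv m h)) + (k + m) • μ Q := by
              rw [add_nsmul]; abel
        _ = _ := by rw [hkm, hμ.map_mul, smul_add]; try abel
      rw [eL, eR] at comb
      have hlead : b • V₀ + b • μ Q < b • (μ g + μ h) + b • μ (hasseDeriv b Q) := by
        have h1 : b • (μ s + μ Q) < b • (μ g + μ h) := wt_nsmul_lt hb.one_le hlt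
        have h2 := wt_add_lt_add h1 (le_refl (b • μ (hasseDeriv b Q)))
          (wt_nsmul_ne_top hβtop b)
        calc b • V₀ + b • μ Q = b • (μ s + μ Q) + b • μ (hasseDeriv b Q) := by
              rw [hV₀def, smul_add, smul_add]; abel
        _ < _ := h2
      have final : b • V₀ + b • μ Q
          < b • μ (hasseDeriv k g * hasseDeriv m h) + b • μ Q :=
        lt_of_lt_of_le hlead comb
      exact wt_lt_of_nsmul_lt (wt_cancel_lt (wt_nsmul_ne_top hQtop b) final)
    -- STEP3 : V₀ < μ (∂_b r)
    have STEP3 : V₀ < μ (hasseDeriv b r) := by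
      have S := star_lt hμ hQ hb hr0 hrdeg hb.one_le
      have eL : b • μ r + b • μ (hasseDeriv b Q) = b • V₀ + b • μ Q := by
        rw [hrval, hV₀def, smul_add, smul_add]; abel
      rw [eL] at S
      have : b • V₀ + b • μ Q < b • μ (hasseDeriv b r) + b • μ Q := by
        calc b • V₀ + b • μ Q < b • μ Q + b • μ (hasseDeriv b r) := S
        _ = b • μ (hasseDeriv b r) + b • μ Q := by abel
      exact wt_lt_of_nsmul_lt (wt_cancel_lt (wt_nsmul_ne_top hQtop b) this)
    have hsplit : hasseDeriv b (Q * s) = hasseDeriv b (g * h) - hasseDeriv b r := by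
      rw [hQseq, map_sub]
    have : V₀ < V₀ := by
      calc V₀ < min (μ (hasseDeriv b (g * h))) (μ (hasseDeriv b r)) := lt_min STEP2 STEP3
      _ ≤ μ (hasseDeriv b (Q * s)) := by rw [hsplit]; exact val_min_le_sub hμ _ _
      _ ≤ V₀ := STEP1
    exact absurd this (lt_irrefl _)
  -- now conclude for each i
  match i with
  | 0 =>
    rw [pow_zero, mul_one]
    show μ g + μ h ≤ μ ((g * h) %ₘ Q)
    have h2 : min (μ (g * h)) (μ (Q * s)) ≤ μ ((g * h) %ₘ Q) := by
      rw [← hr, hreq]; exact val_min_le_sub hμ _ _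
    refine le_trans (le_min (le_of_eq hW.symm) ?_) h2
    calc μ g + μ h ≤ μ s + μ Q := KEY
    _ = μ (Q * s) := by rw [hμ.map_mul, add_comm]
  | 1 =>
    have h1 : qCoeff Q 1 (g * h) = s := by
      show ((g * h) /ₘ Q) %ₘ Q = s
      rw [← hs]
      exact (Polynomial.modByMonic_eq_self_iff hQm).mpr hsdeg
    rw [h1]
    calc μ g + μ h ≤ μ s + μ Q := KEY
    _ = μ (s * Q ^ 1) := by rw [hμ.map_mul, pow_one]
  | (n+2) =>
    have h1 : qCoeff Q (n+2) (g * h) = 0 := by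
      show qCoeff Q (n+1) ((g * h) /ₘ Q) = 0
      rw [← hs]
      exact qCoeff_succ_of_deg_lt hQm hsdeg n
    rw [h1, zero_mul, hμ.map_zero]
    exact le_top

end Crux
section Pow
variable {K Γ : Type*} [Field K] [AddCommGroup Γ] [LinearOrder Γ] [IsOrderedAddMonoid Γ]
variable {μ : Polynomial K → WithTop Γ} {Q : Polynomial K}

lemma deriv_Q_small (hQ0 : Q ≠ 0) {k : ℕ} (hk : 1 ≤ k) :
    (hasseDeriv k Q).degree < Q.degree := by
  by_cases h0 : hasseDeriv k Q = 0
  · rw [h0, Polynomial.degree_zero]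
    exact Ne.bot_lt fun hbot => hQ0 (Polynomial.degree_eq_bot.mp hbot)
  · have h1 : (hasseDeriv k Q).natDegree ≤ Q.natDegree - k :=
      Polynomial.natDegree_hasseDeriv_le Q k
    have h2 : 1 ≤ Q.natDegree := by
      by_contra hq
      have hq0 : Q.natDegree = 0 := by omega
      have := Polynomial.hasseDeriv_eq_zero_of_lt_natDegree Q k (by omega)
      exact h0 this
    exact Polynomial.degree_lt_degree (by omega)

lemma trunc_mul_ge (hμ : IsValAdd μ) (hQ : IsABKP μ Q) (hD : 1 ≤ Q.natDegree)
    {b : ℕ} (hb : GoodB μ Q b) {g : K[X]} (hg : g.degree < Q.degree) (x : K[X]) :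
    μ g + trunc μ Q x ≤ trunc μ Q (g * x) := by
  have hQm := hQ.1
  have hexp : g * x = ∑ j ∈ Finset.range (x.natDegree + 1), (g * qCoeff Q j x) * Q ^ j := by
    conv_lhs => rw [← sum_qCoeff hQm hD x.natDegree x le_rfl]
    rw [Finset.mul_sum]
    exact Finset.sum_congr rfl fun j _ => by ring
  rw [hexp]
  refine trunc_sum_ge hμ hQm hD _ _ fun j _ => ?_
  refine le_trunc fun i => ?_
  rw [qCoeff_mul_pow hQm j i]
  by_cases hji : j ≤ i
  · rw [if_pos hji]
    have hsplit : qCoeff Q (i - j) (g * qCoeff Q j x) * Q ^ i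
        = (qCoeff Q (i - j) (g * qCoeff Q j x) * Q ^ (i - j)) * Q ^ j := by
      rw [mul_assoc, ← pow_add]
      congr 2
      omega
    rw [hsplit, hμ.map_mul]
    have h1 := crux hμ hQ hD hb hg (degree_qCoeff_lt hQm j x) (i - j)
    have h2 : trunc μ Q x ≤ μ (qCoeff Q j x * Q ^ j) := trunc_le hμ hQm hD x j
    calc μ g + trunc μ Q x ≤ μ g + μ (qCoeff Q j x * Q ^ j) := add_le_add_right h2 _
    _ = (μ g + μ (qCoeff Q j x)) + μ (Q ^ j) := by rw [hμ.map_mul, ← add_assoc]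
    _ ≤ μ (qCoeff Q (i - j) (g * qCoeff Q j x) * Q ^ (i - j)) + μ (Q ^ j) :=
        add_le_add_left h1 _
  · rw [if_neg hji, zero_mul, hμ.map_zero]
    exact le_top

lemma pow_deriv_le (hμ : IsValAdd μ) (hQ : IsABKP μ Q) (hD : 1 ≤ Q.natDegree)
    {b : ℕ} (hb : GoodB μ Q b) : ∀ (i l : ℕ),
    (b * i) • μ Q + l • μ (hasseDeriv b Q)
      ≤ b • μ (hasseDeriv l (Q ^ i)) + l • μ Q := by
  have hQtop : μ Q ≠ ⊤ := val_ne_top hμ hQ.1.ne_zero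
  intro i
  induction i with
  | zero =>
    intro l
    cases l with
    | zero =>
      rw [pow_zero, Polynomial.hasseDeriv_zero', hμ.map_one]
      simp
    | succ l =>
      rw [pow_zero, Polynomial.hasseDeriv_eq_zero_of_lt_natDegree (1 : K[X]) _
        (by rw [Polynomial.natDegree_one]; omega), hμ.map_zero, wt_nsmul_top hb.one_le, top_add]
      exact le_top
  | succ i ih =>
    intro l
    have hder : hasseDeriv l (Q ^ (i+1))
        = ∑ p ∈ Finset.HasAntidiagonal.antidiagonal l, hasseDeriv p.1 (Q ^ i) * hasseDeriv p.2 Q := by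
      rw [pow_succ]
      exact Polynomial.hasseDeriv_mul (k := l) _ _
    rw [hder]
    obtain ⟨⟨k, m⟩, hmem, hterm⟩ := val_sum_exists hμ (Finset.HasAntidiagonal.antidiagonal l)
      ⟨(0, l), Finset.HasAntidiagonal.mem_antidiagonal.mpr (by omega)⟩
      (fun p => hasseDeriv p.1 (Q ^ i) * hasseDeriv p.2 Q)
    have hkm : k + m = l := Finset.HasAntidiagonal.mem_antidiagonal.mp hmem
    have B := base_le hμ hb m
    have IH := ih k
    have comb := add_le_add IH B
    have eL : ((b*i) • μ Q + k • μ (hasseDeriv b Q)) + (b • μ Q + m • μ (hasseDeriv b Q))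
        = (b*(i+1)) • μ Q + l • μ (hasseDeriv b Q) := by
      calc ((b*i) • μ Q + k • μ (hasseDeriv b Q)) + (b • μ Q + m • μ (hasseDeriv b Q))
          = ((b*i + b) • μ Q) + (k + m) • μ (hasseDeriv b Q) := by
            rw [add_nsmul, add_nsmul]; abel
      _ = _ := by rw [hkm, show b*i + b = b*(i+1) by ring]
    have eR : (b • μ (hasseDeriv k (Q ^ i)) + k • μ Q) + (m • μ Q + b • μ (hasseDeriv m Q))
        = b • μ (hasseDeriv k (Q ^ i) * hasseDeriv m Q) + l • μ Q := by
      calc (b • μ (hasseDeriv k (Q ^ i)) + k • μ Q) + (m • μ Q + b • μ (hasseDeriv m Q))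
          = (b • μ (hasseDeriv k (Q ^ i)) + b • μ (hasseDeriv m Q)) + (k + m) • μ Q := by
            rw [add_nsmul]; abel
      _ = _ := by rw [hkm, hμ.map_mul, smul_add]; try abel
    rw [eL, eR] at comb
    exact le_trans comb (add_le_add_left (wt_nsmul_mono b hterm) _)

lemma pow_deriv_lt (hμ : IsValAdd μ) (hQ : IsABKP μ Q) (hD : 1 ≤ Q.natDegree)
    {b : ℕ} (hb : GoodB μ Q b) : ∀ (i l : ℕ), b * i < l →
    (b * i) • μ Q + l • μ (hasseDeriv b Q)
      < b • μ (hasseDeriv l (Q ^ i)) + l • μ Q := by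
  have hQtop : μ Q ≠ ⊤ := val_ne_top hμ hQ.1.ne_zero
  have hβtop : μ (hasseDeriv b Q) ≠ ⊤ := hb.ne_top
  intro i
  induction i with
  | zero =>
    intro l hl
    rw [pow_zero, Polynomial.hasseDeriv_eq_zero_of_lt_natDegree (1 : K[X]) _
      (by rw [Polynomial.natDegree_one]; omega), hμ.map_zero, wt_nsmul_top hb.one_le, top_add]
    exact lt_top_iff_ne_top.mpr
      (WithTop.add_ne_top.mpr ⟨wt_nsmul_ne_top hQtop _, wt_nsmul_ne_top hβtop _⟩)
  | succ i ih =>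
    intro l hl
    have hder : hasseDeriv l (Q ^ (i+1))
        = ∑ p ∈ Finset.HasAntidiagonal.antidiagonal l, hasseDeriv p.1 (Q ^ i) * hasseDeriv p.2 Q := by
      rw [pow_succ]
      exact Polynomial.hasseDeriv_mul (k := l) _ _
    rw [hder]
    obtain ⟨⟨k, m⟩, hmem, hterm⟩ := val_sum_exists hμ (Finset.HasAntidiagonal.antidiagonal l)
      ⟨(0, l), Finset.HasAntidiagonal.mem_antidiagonal.mpr (by omega)⟩
      (fun p => hasseDeriv p.1 (Q ^ i) * hasseDeriv p.2 Q)
    have hkm : k + m = l := Finset.HasAntidiagonal.mem_antidiagonal.mp hmem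
    have hexp : b * (i + 1) = b * i + b := by ring
    have hsplit : b * i < k ∨ b < m := by omega
    have comb : ((b*i) • μ Q + k • μ (hasseDeriv b Q)) + (b • μ Q + m • μ (hasseDeriv b Q))
        < (b • μ (hasseDeriv k (Q ^ i)) + k • μ Q) + (m • μ Q + b • μ (hasseDeriv m Q)) := by
      rcases hsplit with hcase | hcase
      · have S := ih k hcase
        have B := base_le hμ hb m
        exact wt_add_lt_add S B
          (WithTop.add_ne_top.mpr ⟨wt_nsmul_ne_top hQtop _, wt_nsmul_ne_top hβtop _⟩)
      · have S := hb.hmax_lt m hcase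
        have B := pow_deriv_le hμ hQ hD hb i k
        have h1 := wt_add_lt_add S B
          (WithTop.add_ne_top.mpr ⟨wt_nsmul_ne_top hQtop _, wt_nsmul_ne_top hβtop _⟩)
        calc ((b*i) • μ Q + k • μ (hasseDeriv b Q)) + (b • μ Q + m • μ (hasseDeriv b Q))
            = (b • μ Q + m • μ (hasseDeriv b Q)) + ((b*i) • μ Q + k • μ (hasseDeriv b Q)) := by
              abel
        _ < (m • μ Q + b • μ (hasseDeriv m Q)) + (b • μ (hasseDeriv k (Q ^ i)) + k • μ Q) := h1
        _ = (b • μ (hasseDeriv k (Q ^ i)) + k • μ Q) + (m • μ Q + b • μ (hasseDeriv m Q)) := by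
              abel
    have eL : ((b*i) • μ Q + k • μ (hasseDeriv b Q)) + (b • μ Q + m • μ (hasseDeriv b Q))
        = (b*(i+1)) • μ Q + l • μ (hasseDeriv b Q) := by
      calc ((b*i) • μ Q + k • μ (hasseDeriv b Q)) + (b • μ Q + m • μ (hasseDeriv b Q))
          = ((b*i + b) • μ Q) + (k + m) • μ (hasseDeriv b Q) := by
            rw [add_nsmul, add_nsmul]; abel
      _ = _ := by rw [hkm, show b*i + b = b*(i+1) by ring]
    have eR : (b • μ (hasseDeriv k (Q ^ i)) + k • μ Q) + (m • μ Q + b • μ (hasseDeriv m Q))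
        = b • μ (hasseDeriv k (Q ^ i) * hasseDeriv m Q) + l • μ Q := by
      calc (b • μ (hasseDeriv k (Q ^ i)) + k • μ Q) + (m • μ Q + b • μ (hasseDeriv m Q))
          = (b • μ (hasseDeriv k (Q ^ i)) + b • μ (hasseDeriv m Q)) + (k + m) • μ Q := by
            rw [add_nsmul]; abel
      _ = _ := by rw [hkm, hμ.map_mul, smul_add]; try abel
    rw [eL, eR] at comb
    exact lt_of_lt_of_le comb (add_le_add_left (wt_nsmul_mono b hterm) _)

lemma pow_deriv_eq (hμ : IsValAdd μ) (hQ : IsABKP μ Q) (hD : 1 ≤ Q.natDegree)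
    {b : ℕ} (hb : GoodB μ Q b) : ∀ i, 1 ≤ i →
    μ (hasseDeriv (b * i) (Q ^ i)) = i • μ (hasseDeriv b Q) := by
  classical
  have hQtop : μ Q ≠ ⊤ := val_ne_top hμ hQ.1.ne_zero
  have hβtop : μ (hasseDeriv b Q) ≠ ⊤ := hb.ne_top
  intro i hi
  induction i, hi using Nat.le_induction with
  | base =>
    rw [mul_one, pow_one, one_nsmul]
  | succ i hi ih =>
    have hder : hasseDeriv (b * (i+1)) (Q ^ (i+1))
        = ∑ p ∈ Finset.HasAntidiagonal.antidiagonal (b * (i+1)),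
            hasseDeriv p.1 (Q ^ i) * hasseDeriv p.2 Q := by
      rw [pow_succ]
      exact Polynomial.hasseDeriv_mul (k := b * (i+1)) _ _
    rw [hder]
    have hVtop : (i+1) • μ (hasseDeriv b Q) ≠ ⊤ := wt_nsmul_ne_top hβtop _
    -- the (b*i, b) term has value exactly (i+1) • β, all others are strictly bigger
    have hval : μ (hasseDeriv (b*i) (Q ^ i) * hasseDeriv b Q)
        = (i+1) • μ (hasseDeriv b Q) := by
      rw [hμ.map_mul, ih, succ_nsmul]
    have hstrict : ∀ p ∈ Finset.HasAntidiagonal.antidiagonal (b * (i+1)), p ≠ (b*i, b) →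
        (i+1) • μ (hasseDeriv b Q) < μ (hasseDeriv p.1 (Q ^ i) * hasseDeriv p.2 Q) := by
      rintro ⟨k, m⟩ hmem hne
      have hkm : k + m = b * (i+1) := Finset.HasAntidiagonal.mem_antidiagonal.mp hmem
      have hexp : b * (i + 1) = b * i + b := by ring
      have hsplit : b * i < k ∨ b < m := by
        by_contra hcon
        push_neg at hcon
        have : k = b * i ∧ m = b := by constructor <;> omega
        exact hne (by rw [this.1, this.2])
      have comb : ((b*i) • μ Q + k • μ (hasseDeriv b Q)) + (b • μ Q + m • μ (hasseDeriv b Q))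
          < (b • μ (hasseDeriv k (Q ^ i)) + k • μ Q) + (m • μ Q + b • μ (hasseDeriv m Q)) := by
        rcases hsplit with hcase | hcase
        · have S := pow_deriv_lt hμ hQ hD hb i k hcase
          have B := base_le hμ hb m
          exact wt_add_lt_add S B
            (WithTop.add_ne_top.mpr ⟨wt_nsmul_ne_top hQtop _, wt_nsmul_ne_top hβtop _⟩)
        · have S := hb.hmax_lt m hcase
          have B := pow_deriv_le hμ hQ hD hb i k
          have h1 := wt_add_lt_add S B
            (WithTop.add_ne_top.mpr ⟨wt_nsmul_ne_top hQtop _, wt_nsmul_ne_top hβtop _⟩)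
          calc ((b*i) • μ Q + k • μ (hasseDeriv b Q)) + (b • μ Q + m • μ (hasseDeriv b Q))
              = (b • μ Q + m • μ (hasseDeriv b Q)) + ((b*i) • μ Q + k • μ (hasseDeriv b Q)) := by
                abel
          _ < (m • μ Q + b • μ (hasseDeriv m Q)) + (b • μ (hasseDeriv k (Q ^ i)) + k • μ Q) := h1
          _ = (b • μ (hasseDeriv k (Q ^ i)) + k • μ Q) + (m • μ Q + b • μ (hasseDeriv m Q)) := by
                abel
      have eL : ((b*i) • μ Q + k • μ (hasseDeriv b Q)) + (b • μ Q + m • μ (hasseDeriv b Q))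
          = (b*(i+1)) • μ Q + (b*(i+1)) • μ (hasseDeriv b Q) := by
        calc ((b*i) • μ Q + k • μ (hasseDeriv b Q)) + (b • μ Q + m • μ (hasseDeriv b Q))
            = ((b*i + b) • μ Q) + (k + m) • μ (hasseDeriv b Q) := by
              rw [add_nsmul, add_nsmul]; abel
        _ = _ := by rw [hkm, show b*i + b = b*(i+1) by ring]
      have eR : (b • μ (hasseDeriv k (Q ^ i)) + k • μ Q) + (m • μ Q + b • μ (hasseDeriv m Q))
          = b • μ (hasseDeriv k (Q ^ i) * hasseDeriv m Q) + (b*(i+1)) • μ Q := by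
        calc (b • μ (hasseDeriv k (Q ^ i)) + k • μ Q) + (m • μ Q + b • μ (hasseDeriv m Q))
            = (b • μ (hasseDeriv k (Q ^ i)) + b • μ (hasseDeriv m Q)) + (k + m) • μ Q := by
              rw [add_nsmul]; abel
        _ = _ := by rw [hkm, hμ.map_mul, smul_add]; try abel
      rw [eL, eR] at comb
      have comb2 : (b*(i+1)) • μ (hasseDeriv b Q) + (b*(i+1)) • μ Q
          < b • μ (hasseDeriv k (Q ^ i) * hasseDeriv m Q) + (b*(i+1)) • μ Q := by
        calc (b*(i+1)) • μ (hasseDeriv b Q) + (b*(i+1)) • μ Q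
            = (b*(i+1)) • μ Q + (b*(i+1)) • μ (hasseDeriv b Q) := by abel
        _ < _ := comb
      have comb3 := wt_cancel_lt (wt_nsmul_ne_top hQtop _) comb2
      have e2 : (b*(i+1)) • μ (hasseDeriv b Q) = b • ((i+1) • μ (hasseDeriv b Q)) :=
        mul_nsmul' (μ (hasseDeriv b Q)) b (i+1) ▸ rfl
      rw [e2] at comb3
      exact wt_lt_of_nsmul_lt comb3
    apply le_antisymm
    · exact val_min_upper hμ _ _ (j₀ := (b*i, b))
        (Finset.HasAntidiagonal.mem_antidiagonal.mpr (by ring)) hVtop hval hstrict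
    · refine val_sum_le hμ _ _ fun p hp => ?_
      by_cases hp0 : p = (b*i, b)
      · rw [hp0, hval]
      · exact (hstrict p hp hp0).le

lemma pow_deriv_trunc_le (hμ : IsValAdd μ) (hQ : IsABKP μ Q) (hD : 1 ≤ Q.natDegree)
    {b : ℕ} (hb : GoodB μ Q b) : ∀ (i l : ℕ),
    (b * i) • μ Q + l • μ (hasseDeriv b Q)
      ≤ b • trunc μ Q (hasseDeriv l (Q ^ i)) + l • μ Q := by
  have hQm := hQ.1
  have hQ0 : Q ≠ 0 := hQm.ne_zero
  intro i
  induction i with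
  | zero =>
    intro l
    cases l with
    | zero =>
      rw [pow_zero, Polynomial.hasseDeriv_zero',
        trunc_eq_val_of_deg_lt hμ hQm hD (by
          rw [Polynomial.degree_one]
          exact Polynomial.natDegree_pos_iff_degree_pos.mp (by omega)), hμ.map_one]
      simp
    | succ l =>
      rw [pow_zero, Polynomial.hasseDeriv_eq_zero_of_lt_natDegree (1 : K[X]) _
        (by rw [Polynomial.natDegree_one]; omega), trunc_zero hμ,
        wt_nsmul_top hb.one_le, top_add]
      exact le_top
  | succ i ih =>
    intro l
    have hder : hasseDeriv l (Q ^ (i+1))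
        = ∑ p ∈ Finset.HasAntidiagonal.antidiagonal l, hasseDeriv p.1 (Q ^ i) * hasseDeriv p.2 Q := by
      rw [pow_succ]
      exact Polynomial.hasseDeriv_mul (k := l) _ _
    rw [hder]
    obtain ⟨⟨k, m⟩, hmem, hterm⟩ := trunc_sum_exists hμ hQm hD (Finset.HasAntidiagonal.antidiagonal l)
      ⟨(0, l), Finset.HasAntidiagonal.mem_antidiagonal.mpr (by omega)⟩
      (fun p => hasseDeriv p.1 (Q ^ i) * hasseDeriv p.2 Q)
    have hkm : k + m = l := Finset.HasAntidiagonal.mem_antidiagonal.mp hmem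
    have hterm' : (b*(i+1)) • μ Q + l • μ (hasseDeriv b Q)
        ≤ b • trunc μ Q (hasseDeriv k (Q ^ i) * hasseDeriv m Q) + l • μ Q := by
      by_cases hm0 : m = 0
      · subst hm0
        have hQderiv : hasseDeriv 0 Q = Q := Polynomial.hasseDeriv_zero' Q
        have hmul : μ Q + trunc μ Q (hasseDeriv k (Q ^ i))
            ≤ trunc μ Q (hasseDeriv k (Q ^ i) * hasseDeriv 0 Q) := by
          rw [hQderiv, mul_comm]
          exact trunc_mulQ hμ hQm hD _
        have hk : k = l := by omega
        subst hk
        calc (b*(i+1)) • μ Q + k • μ (hasseDeriv b Q)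
            = b • μ Q + ((b*i) • μ Q + k • μ (hasseDeriv b Q)) := by
              rw [show b*(i+1) = b + b*i by ring, add_nsmul]; abel
        _ ≤ b • μ Q + (b • trunc μ Q (hasseDeriv k (Q ^ i)) + k • μ Q) :=
              add_le_add_right (ih k) _
        _ = b • (μ Q + trunc μ Q (hasseDeriv k (Q ^ i))) + k • μ Q := by
              rw [smul_add]; abel
        _ ≤ b • trunc μ Q (hasseDeriv k (Q ^ i) * hasseDeriv 0 Q) + k • μ Q :=
              add_le_add_left (wt_nsmul_mono b hmul) _
      · have hm1 : 1 ≤ m := by omega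
        have hmder : (hasseDeriv m Q).degree < Q.degree := deriv_Q_small hQ0 hm1
        have hmul : μ (hasseDeriv m Q) + trunc μ Q (hasseDeriv k (Q ^ i))
            ≤ trunc μ Q (hasseDeriv k (Q ^ i) * hasseDeriv m Q) := by
          rw [mul_comm]
          exact trunc_mul_ge hμ hQ hD hb hmder _
        have B := base_le hμ hb m
        have IH := ih k
        have comb := add_le_add IH B
        have eL : ((b*i) • μ Q + k • μ (hasseDeriv b Q))
              + (b • μ Q + m • μ (hasseDeriv b Q))
            = (b*(i+1)) • μ Q + l • μ (hasseDeriv b Q) := by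
          calc ((b*i) • μ Q + k • μ (hasseDeriv b Q))
                + (b • μ Q + m • μ (hasseDeriv b Q))
              = ((b*i + b) • μ Q) + (k + m) • μ (hasseDeriv b Q) := by
                rw [add_nsmul, add_nsmul]; abel
          _ = _ := by rw [hkm, show b*i + b = b*(i+1) by ring]
        have eR : (b • trunc μ Q (hasseDeriv k (Q ^ i)) + k • μ Q)
              + (m • μ Q + b • μ (hasseDeriv m Q))
            = b • (μ (hasseDeriv m Q) + trunc μ Q (hasseDeriv k (Q ^ i))) + l • μ Q := by
          calc (b • trunc μ Q (hasseDeriv k (Q ^ i)) + k • μ Q)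
                + (m • μ Q + b • μ (hasseDeriv m Q))
              = (b • trunc μ Q (hasseDeriv k (Q ^ i)) + b • μ (hasseDeriv m Q))
                  + (k + m) • μ Q := by
                rw [add_nsmul]; abel
          _ = _ := by rw [hkm, smul_add]; abel
        rw [eL, eR] at comb
        exact le_trans comb (add_le_add_left (wt_nsmul_mono b hmul) _)
    exact le_trans hterm' (add_le_add_left (wt_nsmul_mono b hterm) _)

end Pow
section MainLemmas
variable {K Γ : Type*} [Field K] [AddCommGroup Γ] [LinearOrder Γ] [IsOrderedAddMonoid Γ]
variable {μ : Polynomial K → WithTop Γ} {Q : Polynomial K}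

lemma deriv_expand (hQm : Q.Monic) (hD : 1 ≤ Q.natDegree) (f : K[X]) (j : ℕ) :
    hasseDeriv j f = ∑ p ∈ (Finset.range (f.natDegree + 1)) ×ˢ (Finset.HasAntidiagonal.antidiagonal j),
      hasseDeriv p.2.1 (qCoeff Q p.1 f) * hasseDeriv p.2.2 (Q ^ p.1) := by
  conv_lhs => rw [← sum_qCoeff hQm hD f.natDegree f le_rfl]
  rw [map_sum, Finset.sum_product]
  exact Finset.sum_congr rfl fun m _ => Polynomial.hasseDeriv_mul (k := j) _ _

lemma deriv_f_lower (hμ : IsValAdd μ) (hQ : IsABKP μ Q) (hD : 1 ≤ Q.natDegree)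
    {b : ℕ} (hb : GoodB μ Q b) (f : K[X]) (i : ℕ) :
    b • trunc μ Q f + i • μ (hasseDeriv b Q)
      ≤ i • μ Q + b • trunc μ Q (hasseDeriv i f) := by
  have hQm := hQ.1
  have hQ0 : Q ≠ 0 := hQm.ne_zero
  rw [deriv_expand hQm hD f i]
  obtain ⟨⟨m, k, l⟩, hp, hterm⟩ := trunc_sum_exists hμ hQm hD
    ((Finset.range (f.natDegree + 1)) ×ˢ (Finset.HasAntidiagonal.antidiagonal i))
    ⟨(0, (0, i)), Finset.mem_product.mpr ⟨Finset.mem_range.mpr (by omega),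
      Finset.HasAntidiagonal.mem_antidiagonal.mpr (by simp)⟩⟩
    (fun p => hasseDeriv p.2.1 (qCoeff Q p.1 f) * hasseDeriv p.2.2 (Q ^ p.1))
  have hkl : k + l = i := Finset.HasAntidiagonal.mem_antidiagonal.mp (Finset.mem_product.mp hp).2
  have hmulge : μ (hasseDeriv k (qCoeff Q m f)) + trunc μ Q (hasseDeriv l (Q ^ m))
      ≤ trunc μ Q (hasseDeriv k (qCoeff Q m f) * hasseDeriv l (Q ^ m)) :=
    trunc_mul_ge hμ hQ hD hb (deriv_small hQ0 (degree_qCoeff_lt hQm m f) k) _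
  have S := star_le hμ hQ hb (degree_qCoeff_lt hQm m f) k
  have P := pow_deriv_trunc_le hμ hQ hD hb m l
  have comb := add_le_add S P
  have eL : (b • μ (qCoeff Q m f) + k • μ (hasseDeriv b Q))
        + ((b * m) • μ Q + l • μ (hasseDeriv b Q))
      = b • μ (qCoeff Q m f * Q ^ m) + i • μ (hasseDeriv b Q) := by
    calc (b • μ (qCoeff Q m f) + k • μ (hasseDeriv b Q))
          + ((b * m) • μ Q + l • μ (hasseDeriv b Q))
        = (b • μ (qCoeff Q m f) + (b*m) • μ Q) + (k + l) • μ (hasseDeriv b Q) := by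
          rw [add_nsmul]; abel
    _ = _ := by
          rw [hkl, hμ.map_mul, val_pow hμ, smul_add, smul_smul]
  have eR : (k • μ Q + b • μ (hasseDeriv k (qCoeff Q m f)))
        + (b • trunc μ Q (hasseDeriv l (Q ^ m)) + l • μ Q)
      = b • (μ (hasseDeriv k (qCoeff Q m f)) + trunc μ Q (hasseDeriv l (Q ^ m))) + i • μ Q := by
    calc (k • μ Q + b • μ (hasseDeriv k (qCoeff Q m f)))
          + (b • trunc μ Q (hasseDeriv l (Q ^ m)) + l • μ Q)
        = (b • μ (hasseDeriv k (qCoeff Q m f)) + b • trunc μ Q (hasseDeriv l (Q ^ m)))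
            + (k + l) • μ Q := by
          rw [add_nsmul]; abel
    _ = _ := by rw [hkl, smul_add]
  rw [eL, eR] at comb
  have h1 : b • trunc μ Q f + i • μ (hasseDeriv b Q)
      ≤ b • μ (qCoeff Q m f * Q ^ m) + i • μ (hasseDeriv b Q) :=
    add_le_add_left (wt_nsmul_mono b (trunc_le hμ hQm hD f m)) _
  calc b • trunc μ Q f + i • μ (hasseDeriv b Q)
      ≤ b • (μ (hasseDeriv k (qCoeff Q m f)) + trunc μ Q (hasseDeriv l (Q ^ m))) + i • μ Q :=
        le_trans h1 comb
  _ ≤ b • trunc μ Q (hasseDeriv k (qCoeff Q m f) * hasseDeriv l (Q ^ m)) + i • μ Q :=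
        add_le_add_left (wt_nsmul_mono b hmulge) _
  _ ≤ b • trunc μ Q (∑ p ∈ (Finset.range (f.natDegree + 1)) ×ˢ (Finset.HasAntidiagonal.antidiagonal i),
        hasseDeriv p.2.1 (qCoeff Q p.1 f) * hasseDeriv p.2.2 (Q ^ p.1)) + i • μ Q :=
        add_le_add_left (wt_nsmul_mono b hterm) _
  _ = i • μ Q + b • trunc μ Q (∑ p ∈ (Finset.range (f.natDegree + 1)) ×ˢ
        (Finset.HasAntidiagonal.antidiagonal i), hasseDeriv p.2.1 (qCoeff Q p.1 f)
          * hasseDeriv p.2.2 (Q ^ p.1)) := by abel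

lemma deriv_f_lower_strict (hμ : IsValAdd μ) (hQ : IsABKP μ Q) (hD : 1 ≤ Q.natDegree)
    {b : ℕ} (hb : GoodB μ Q b) {f : K[X]} (hf : f ≠ 0)
    (hS : ∀ m, 1 ≤ m → trunc μ Q f < μ (qCoeff Q m f * Q ^ m)) {i : ℕ} (hi : 1 ≤ i) :
    b • trunc μ Q f + i • μ (hasseDeriv b Q)
      < i • μ Q + b • trunc μ Q (hasseDeriv i f) := by
  have hQm := hQ.1
  have hQ0 : Q ≠ 0 := hQm.ne_zero
  have hQtop : μ Q ≠ ⊤ := val_ne_top hμ hQ0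
  have hβtop : μ (hasseDeriv b Q) ≠ ⊤ := hb.ne_top
  have htf : trunc μ Q f ≠ ⊤ :=
    fun h => (val_ne_top hμ hf) (top_le_iff.mp (h ▸ trunc_le_val hμ hQm hD f))
  have hLtop : b • trunc μ Q f + i • μ (hasseDeriv b Q) ≠ ⊤ :=
    WithTop.add_ne_top.mpr ⟨wt_nsmul_ne_top htf b, wt_nsmul_ne_top hβtop i⟩
  rw [deriv_expand hQm hD f i]
  obtain ⟨⟨m, k, l⟩, hp, hterm⟩ := trunc_sum_exists hμ hQm hD
    ((Finset.range (f.natDegree + 1)) ×ˢ (Finset.HasAntidiagonal.antidiagonal i))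
    ⟨(0, (0, i)), Finset.mem_product.mpr ⟨Finset.mem_range.mpr (by omega),
      Finset.HasAntidiagonal.mem_antidiagonal.mpr (by simp)⟩⟩
    (fun p => hasseDeriv p.2.1 (qCoeff Q p.1 f) * hasseDeriv p.2.2 (Q ^ p.1))
  have hkl : k + l = i := Finset.HasAntidiagonal.mem_antidiagonal.mp (Finset.mem_product.mp hp).2
  -- it suffices to prove the strict bound for the minimal term
  have hsuff : b • trunc μ Q f + i • μ (hasseDeriv b Q)
      < b • trunc μ Q (hasseDeriv k (qCoeff Q m f) * hasseDeriv l (Q ^ m)) + i • μ Q := by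
    by_cases hfm : qCoeff Q m f = 0
    · rw [hfm, map_zero, zero_mul, trunc_zero hμ, wt_nsmul_top hb.one_le, top_add]
      exact lt_top_iff_ne_top.mpr hLtop
    rcases Nat.eq_zero_or_pos m with hm0 | hm1
    · -- m = 0 : use the strict key polynomial inequality
      subst hm0
      rcases Nat.eq_zero_or_pos l with hl0 | hl1
      · subst hl0
        have hki : k = i := by omega
        subst hki
        have h1 : hasseDeriv 0 ((Q : K[X]) ^ 0) = 1 := by
          rw [pow_zero, Polynomial.hasseDeriv_zero']
        rw [h1, mul_one, trunc_eq_val_of_deg_lt hμ hQm hD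
          (deriv_small hQ0 (degree_qCoeff_lt hQm 0 f) k)]
        have S := star_lt hμ hQ hb hfm (degree_qCoeff_lt hQm 0 f) hi
        have h2 : b • trunc μ Q f + k • μ (hasseDeriv b Q)
            ≤ b • μ (qCoeff Q 0 f) + k • μ (hasseDeriv b Q) := by
          refine add_le_add_left (wt_nsmul_mono b ?_) _
          have := trunc_le hμ hQm hD f 0
          rwa [pow_zero, mul_one] at this
        calc b • trunc μ Q f + k • μ (hasseDeriv b Q)
            ≤ b • μ (qCoeff Q 0 f) + k • μ (hasseDeriv b Q) := h2
        _ < k • μ Q + b • μ (hasseDeriv k (qCoeff Q 0 f)) := S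
        _ = b • μ (hasseDeriv k (qCoeff Q 0 f)) + k • μ Q := by abel
      · -- l ≥ 1 : the `Q^0` derivative vanishes
        have h1 : hasseDeriv l ((Q : K[X]) ^ 0) = 0 := by
          rw [pow_zero]
          exact Polynomial.hasseDeriv_eq_zero_of_lt_natDegree (1 : K[X]) _
            (by rw [Polynomial.natDegree_one]; omega)
        rw [h1, mul_zero, trunc_zero hμ, wt_nsmul_top hb.one_le, top_add]
        exact lt_top_iff_ne_top.mpr hLtop
    · -- m ≥ 1 : strictness comes from `hS`
      have hmulge : μ (hasseDeriv k (qCoeff Q m f)) + trunc μ Q (hasseDeriv l (Q ^ m))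
          ≤ trunc μ Q (hasseDeriv k (qCoeff Q m f) * hasseDeriv l (Q ^ m)) :=
        trunc_mul_ge hμ hQ hD hb (deriv_small hQ0 (degree_qCoeff_lt hQm m f) k) _
      have S := star_le hμ hQ hb (degree_qCoeff_lt hQm m f) k
      have P := pow_deriv_trunc_le hμ hQ hD hb m l
      have comb := add_le_add S P
      have eL : (b • μ (qCoeff Q m f) + k • μ (hasseDeriv b Q))
            + ((b * m) • μ Q + l • μ (hasseDeriv b Q))
          = b • μ (qCoeff Q m f * Q ^ m) + i • μ (hasseDeriv b Q) := by
        calc (b • μ (qCoeff Q m f) + k • μ (hasseDeriv b Q))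
              + ((b * m) • μ Q + l • μ (hasseDeriv b Q))
            = (b • μ (qCoeff Q m f) + (b*m) • μ Q) + (k + l) • μ (hasseDeriv b Q) := by
              rw [add_nsmul]; abel
        _ = _ := by
              rw [hkl, hμ.map_mul, val_pow hμ, smul_add, smul_smul]
      have eR : (k • μ Q + b • μ (hasseDeriv k (qCoeff Q m f)))
            + (b • trunc μ Q (hasseDeriv l (Q ^ m)) + l • μ Q)
          = b • (μ (hasseDeriv k (qCoeff Q m f)) + trunc μ Q (hasseDeriv l (Q ^ m)))
              + i • μ Q := by
        calc (k • μ Q + b • μ (hasseDeriv k (qCoeff Q m f)))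
              + (b • trunc μ Q (hasseDeriv l (Q ^ m)) + l • μ Q)
            = (b • μ (hasseDeriv k (qCoeff Q m f)) + b • trunc μ Q (hasseDeriv l (Q ^ m)))
                + (k + l) • μ Q := by
              rw [add_nsmul]; abel
        _ = _ := by rw [hkl, smul_add]
      rw [eL, eR] at comb
      have hstrict : b • trunc μ Q f + i • μ (hasseDeriv b Q)
          < b • μ (qCoeff Q m f * Q ^ m) + i • μ (hasseDeriv b Q) :=
        wt_add_lt_add (wt_nsmul_lt hb.one_le (hS m hm1)) (le_refl _)
          (wt_nsmul_ne_top hβtop i)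
      calc b • trunc μ Q f + i • μ (hasseDeriv b Q)
          < b • μ (qCoeff Q m f * Q ^ m) + i • μ (hasseDeriv b Q) := hstrict
      _ ≤ b • (μ (hasseDeriv k (qCoeff Q m f)) + trunc μ Q (hasseDeriv l (Q ^ m)))
            + i • μ Q := comb
      _ ≤ b • trunc μ Q (hasseDeriv k (qCoeff Q m f) * hasseDeriv l (Q ^ m)) + i • μ Q :=
            add_le_add_left (wt_nsmul_mono b hmulge) _
  calc b • trunc μ Q f + i • μ (hasseDeriv b Q)
      < b • trunc μ Q (hasseDeriv k (qCoeff Q m f) * hasseDeriv l (Q ^ m)) + i • μ Q := hsuff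
  _ ≤ b • trunc μ Q (∑ p ∈ (Finset.range (f.natDegree + 1)) ×ˢ (Finset.HasAntidiagonal.antidiagonal i),
        hasseDeriv p.2.1 (qCoeff Q p.1 f) * hasseDeriv p.2.2 (Q ^ p.1)) + i • μ Q :=
        add_le_add_left (wt_nsmul_mono b hterm) _
  _ = i • μ Q + b • trunc μ Q (∑ p ∈ (Finset.range (f.natDegree + 1)) ×ˢ
        (Finset.HasAntidiagonal.antidiagonal i), hasseDeriv p.2.1 (qCoeff Q p.1 f)
          * hasseDeriv p.2.2 (Q ^ p.1)) := by abel

end MainLemmas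
section ClaimA
variable {K Γ : Type*} [Field K] [AddCommGroup Γ] [LinearOrder Γ] [IsOrderedAddMonoid Γ]
variable {μ : Polynomial K → WithTop Γ} {Q : Polynomial K}

lemma claimA (hμ : IsValAdd μ) (hQ : IsABKP μ Q) (hD : 1 ≤ Q.natDegree)
    {b : ℕ} (hb : GoodB μ Q b) {f : K[X]} (hf : f ≠ 0) {i₀ : ℕ} (hi₀ : 1 ≤ i₀)
    (heq : μ (qCoeff Q i₀ f * Q ^ i₀) = trunc μ Q f)
    (hgt : ∀ m, i₀ < m → trunc μ Q f < μ (qCoeff Q m f * Q ^ m)) :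
    μ (hasseDeriv (b * i₀) f) + i₀ • μ Q ≤ trunc μ Q f + i₀ • μ (hasseDeriv b Q) := by
  classical
  have hQm := hQ.1
  have hQ0 : Q ≠ 0 := hQm.ne_zero
  have hQtop : μ Q ≠ ⊤ := val_ne_top hμ hQ0
  have hβtop : μ (hasseDeriv b Q) ≠ ⊤ := hb.ne_top
  have htf : trunc μ Q f ≠ ⊤ :=
    fun h => (val_ne_top hμ hf) (top_le_iff.mp (h ▸ trunc_le_val hμ hQm hD f))
  have hf0 : qCoeff Q i₀ f ≠ 0 := by
    intro h0
    rw [h0, zero_mul, hμ.map_zero] at heq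
    exact htf heq.symm
  have hf0top : μ (qCoeff Q i₀ f) ≠ ⊤ := val_ne_top hμ hf0
  have hi₀N : i₀ ≤ f.natDegree := by
    by_contra hcon
    exact hf0 (qCoeff_eq_zero hQm hD i₀ f (by omega))
  have hEQ : trunc μ Q f = μ (qCoeff Q i₀ f) + i₀ • μ Q := by
    rw [← heq, hμ.map_mul, val_pow hμ]
  set V : WithTop Γ := μ (qCoeff Q i₀ f) + i₀ • μ (hasseDeriv b Q) with hVdef
  have hVtop : V ≠ ⊤ := WithTop.add_ne_top.mpr ⟨hf0top, wt_nsmul_ne_top hβtop _⟩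
  have hkey : b • V + (b * i₀) • μ Q
      = b • trunc μ Q f + (b * i₀) • μ (hasseDeriv b Q) := by
    rw [hVdef, hEQ, smul_add, smul_add, smul_smul b i₀ (μ Q),
      smul_smul b i₀ (μ (hasseDeriv b Q))]
    abel
  -- main upper bound on the derivative
  have hupper : μ (hasseDeriv (b * i₀) f) ≤ V := by
    rw [deriv_expand hQm hD f (b * i₀)]
    refine val_min_upper hμ _ _ (j₀ := (i₀, (0, b * i₀)))
      (Finset.mem_product.mpr ⟨Finset.mem_range.mpr (by omega),
        Finset.HasAntidiagonal.mem_antidiagonal.mpr (by simp)⟩) hVtop ?_ ?_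
    · show μ (hasseDeriv 0 (qCoeff Q i₀ f) * hasseDeriv (b * i₀) (Q ^ i₀)) = V
      rw [Polynomial.hasseDeriv_zero', hμ.map_mul, pow_deriv_eq hμ hQ hD hb i₀ hi₀]
    · rintro ⟨m, k, l⟩ hp hne
      have hkl : k + l = b * i₀ := Finset.HasAntidiagonal.mem_antidiagonal.mp (Finset.mem_product.mp hp).2
      show V < μ (hasseDeriv k (qCoeff Q m f) * hasseDeriv l (Q ^ m))
      by_cases hfm : qCoeff Q m f = 0
      · rw [hfm, map_zero, zero_mul, hμ.map_zero]
        exact lt_top_iff_ne_top.mpr hVtop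
      have hfmtop : μ (qCoeff Q m f) ≠ ⊤ := val_ne_top hμ hfm
      -- in every non-designated case we show the `b`-scaled strict inequality
      have hmain : b • trunc μ Q f + (b * i₀) • μ (hasseDeriv b Q)
          < b • μ (hasseDeriv k (qCoeff Q m f) * hasseDeriv l (Q ^ m))
              + (b * i₀) • μ Q := by
        have htr : b • trunc μ Q f + (b * i₀) • μ (hasseDeriv b Q)
            ≤ b • μ (qCoeff Q m f * Q ^ m) + (b * i₀) • μ (hasseDeriv b Q) :=
          add_le_add_left (wt_nsmul_mono b (trunc_le hμ hQm hD f m)) _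
        rcases Nat.eq_zero_or_pos k with hk0 | hk1
        · -- k = 0, l = b * i₀, m ≠ i₀
          subst hk0
          have hl : l = b * i₀ := by omega
          subst hl
          have hmne : m ≠ i₀ := by
            intro hcon
            exact hne (by rw [hcon])
          have hterm : μ (hasseDeriv 0 (qCoeff Q m f) * hasseDeriv (b * i₀) (Q ^ m))
              = μ (qCoeff Q m f) + μ (hasseDeriv (b * i₀) (Q ^ m)) := by
            rw [Polynomial.hasseDeriv_zero', hμ.map_mul]
          rcases lt_or_gt_of_ne hmne with hmlt | hmgt
          · -- m < i₀ : strict power bound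
            have hblt : b * m < b * i₀ :=
              mul_lt_mul_of_pos_left hmlt (by have := hb.one_le; omega)
            have P := pow_deriv_lt hμ hQ hD hb m (b * i₀) hblt
            have comb := wt_add_lt_add P (le_refl (b • μ (qCoeff Q m f)))
              (wt_nsmul_ne_top hfmtop b)
            calc b • trunc μ Q f + (b * i₀) • μ (hasseDeriv b Q)
                ≤ b • μ (qCoeff Q m f * Q ^ m) + (b * i₀) • μ (hasseDeriv b Q) := htr
            _ = ((b * m) • μ Q + (b * i₀) • μ (hasseDeriv b Q)) + b • μ (qCoeff Q m f) := by
                  rw [hμ.map_mul, val_pow hμ, smul_add, smul_smul]; abel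
            _ < (b • μ (hasseDeriv (b * i₀) (Q ^ m)) + (b * i₀) • μ Q)
                  + b • μ (qCoeff Q m f) := comb
            _ = b • (μ (qCoeff Q m f) + μ (hasseDeriv (b * i₀) (Q ^ m)))
                  + (b * i₀) • μ Q := by
                  rw [smul_add]; abel
            _ = b • μ (hasseDeriv 0 (qCoeff Q m f) * hasseDeriv (b * i₀) (Q ^ m))
                  + (b * i₀) • μ Q := by rw [hterm]
          · -- m > i₀ : strict from maximality of `i₀`
            have hstrict : b • trunc μ Q f + (b * i₀) • μ (hasseDeriv b Q)
                < b • μ (qCoeff Q m f * Q ^ m) + (b * i₀) • μ (hasseDeriv b Q) :=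
              wt_add_lt_add (wt_nsmul_lt hb.one_le (hgt m hmgt)) (le_refl _)
                (wt_nsmul_ne_top hβtop _)
            have P := pow_deriv_le hμ hQ hD hb m (b * i₀)
            have comb := add_le_add (le_refl (b • μ (qCoeff Q m f))) P
            calc b • trunc μ Q f + (b * i₀) • μ (hasseDeriv b Q)
                < b • μ (qCoeff Q m f * Q ^ m) + (b * i₀) • μ (hasseDeriv b Q) := hstrict
            _ = b • μ (qCoeff Q m f) + ((b * m) • μ Q + (b * i₀) • μ (hasseDeriv b Q)) := by
                  rw [hμ.map_mul, val_pow hμ, smul_add, smul_smul]; abel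
            _ ≤ b • μ (qCoeff Q m f) + (b • μ (hasseDeriv (b * i₀) (Q ^ m))
                  + (b * i₀) • μ Q) := comb
            _ = b • (μ (qCoeff Q m f) + μ (hasseDeriv (b * i₀) (Q ^ m)))
                  + (b * i₀) • μ Q := by
                  rw [smul_add]; abel
            _ = b • μ (hasseDeriv 0 (qCoeff Q m f) * hasseDeriv (b * i₀) (Q ^ m))
                  + (b * i₀) • μ Q := by rw [hterm]
        · -- k ≥ 1 : strict key polynomial inequality for the coefficient
          have S := star_lt hμ hQ hb hfm (degree_qCoeff_lt hQm m f) hk1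
          have P := pow_deriv_le hμ hQ hD hb m l
          have comb := wt_add_lt_add S P
            (WithTop.add_ne_top.mpr ⟨wt_nsmul_ne_top hQtop _, wt_nsmul_ne_top hβtop _⟩)
          have eL : (b • μ (qCoeff Q m f) + k • μ (hasseDeriv b Q))
                + ((b * m) • μ Q + l • μ (hasseDeriv b Q))
              = b • μ (qCoeff Q m f * Q ^ m) + (b * i₀) • μ (hasseDeriv b Q) := by
            calc (b • μ (qCoeff Q m f) + k • μ (hasseDeriv b Q))
                  + ((b * m) • μ Q + l • μ (hasseDeriv b Q))
                = (b • μ (qCoeff Q m f) + (b * m) • μ Q)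
                    + (k + l) • μ (hasseDeriv b Q) := by
                  rw [add_nsmul]; abel
            _ = _ := by rw [hkl, hμ.map_mul, val_pow hμ, smul_add, smul_smul]
          have eR : (k • μ Q + b • μ (hasseDeriv k (qCoeff Q m f)))
                + (b • μ (hasseDeriv l (Q ^ m)) + l • μ Q)
              = b • μ (hasseDeriv k (qCoeff Q m f) * hasseDeriv l (Q ^ m))
                  + (b * i₀) • μ Q := by
            calc (k • μ Q + b • μ (hasseDeriv k (qCoeff Q m f)))
                  + (b • μ (hasseDeriv l (Q ^ m)) + l • μ Q)
                = (b • μ (hasseDeriv k (qCoeff Q m f)) + b • μ (hasseDeriv l (Q ^ m)))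
                    + (k + l) • μ Q := by
                  rw [add_nsmul]; abel
            _ = _ := by rw [hkl, hμ.map_mul, smul_add]
          rw [eL, eR] at comb
          exact lt_of_le_of_lt htr comb
      rw [← hkey] at hmain
      exact wt_lt_of_nsmul_lt (wt_cancel_lt (wt_nsmul_ne_top hQtop _) hmain)
  calc μ (hasseDeriv (b * i₀) f) + i₀ • μ Q ≤ V + i₀ • μ Q :=
        add_le_add_left hupper _
  _ = trunc μ Q f + i₀ • μ (hasseDeriv b Q) := by
        rw [hVdef, hEQ]; abel

end ClaimA
section Degenerate
variable {K Γ : Type*} [Field K] [AddCommGroup Γ] [LinearOrder Γ] [IsOrderedAddMonoid Γ]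
variable {μ : Polynomial K → WithTop Γ}

lemma qCoeff_one_all : ∀ (i : ℕ) (f : K[X]), qCoeff (1 : K[X]) i f = 0 := by
  intro i
  induction i with
  | zero => intro f; exact Polynomial.modByMonic_one f
  | succ n ih =>
    intro f
    show qCoeff (1 : K[X]) n (f /ₘ 1) = 0
    exact ih _

lemma trunc_one (hμ : IsValAdd μ) (f : K[X]) : trunc μ (1 : K[X]) f = ⊤ := by
  apply top_le_iff.mp
  refine Finset.le_inf fun i _ => ?_
  rw [qCoeff_one_all, zero_mul, hμ.map_zero]

end Degenerate

/-- `ε_{μ_Q}(f) = ε_μ(Q)` if and only if `S_{Q,μ}(f) ≠ {0}`, i.e. some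
index `i ≥ 1` of the `Q`-expansion achieves the minimum in `μ_Q(f) = min_i μ(fᵢ Qⁱ)`. -/
theorem eps_eq_iff_S_ne_singleton {K Γ : Type*} [Field K] [AddCommGroup Γ] [LinearOrder Γ] [IsOrderedAddMonoid Γ]
    (ν : K → WithTop Γ) (μ : Polynomial K → WithTop Γ)
    (hν : IsValAdd ν) (hμ : IsValAdd μ) (hext : ∀ c : K, μ (Polynomial.C c) = ν c)
    (Q : Polynomial K) (hQ : IsABKP μ Q) (f : Polynomial K) (hf : f ≠ 0) :
    (EpsLE (trunc μ Q) f μ Q ∧ EpsLE μ Q (trunc μ Q) f) ↔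
      ∃ i, 1 ≤ i ∧ μ (qCoeff Q i f * Q ^ i) = trunc μ Q f := by
  classical
  have hQm := hQ.1
  by_cases hD : 1 ≤ Q.natDegree
  · -- main case
    have hQ0 : Q ≠ 0 := hQm.ne_zero
    have hQtop : μ Q ≠ ⊤ := val_ne_top hμ hQ0
    obtain ⟨b, hb⟩ := exists_goodB hμ hQm hD
    have hβtop : μ (hasseDeriv b Q) ≠ ⊤ := hb.ne_top
    have htf : trunc μ Q f ≠ ⊤ :=
      fun h => (val_ne_top hμ hf) (top_le_iff.mp (h ▸ trunc_le_val hμ hQm hD f))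
    constructor
    · rintro ⟨hc1, hc2⟩
      by_contra hno
      push_neg at hno
      have hS : ∀ m, 1 ≤ m → trunc μ Q f < μ (qCoeff Q m f * Q ^ m) := fun m hm =>
        lt_of_le_of_ne (trunc_le hμ hQm hD f m) (fun h => hno m hm h.symm)
      obtain ⟨j, hj1, hineq⟩ := hc2 b hb.one_le
      exact absurd (deriv_f_lower_strict hμ hQ hD hb hf hS hj1) (not_lt.mpr hineq)
    · rintro ⟨i, hi1, hie⟩
      -- choose the largest index realizing the truncation
      have hiN : i ≤ f.natDegree := by
        by_contra hcon
        rw [qCoeff_eq_zero hQm hD i f (by omega), zero_mul, hμ.map_zero] at hie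
        exact htf hie.symm
      haveI : DecidablePred (fun m => μ (qCoeff Q m f * Q ^ m) = trunc μ Q f) :=
        fun _ => Classical.propDecidable _
      set S' : Finset ℕ := (Finset.Icc 1 f.natDegree).filter
        (fun m => μ (qCoeff Q m f * Q ^ m) = trunc μ Q f) with hS'
      have hSne : S'.Nonempty :=
        ⟨i, Finset.mem_filter.mpr ⟨Finset.mem_Icc.mpr ⟨hi1, hiN⟩, hie⟩⟩
      set i₀ := S'.max' hSne with hi₀def
      have hi₀mem : i₀ ∈ S' := S'.max'_mem hSne
      have hi₀Icc := (Finset.mem_filter.mp hi₀mem).1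
      rw [Finset.mem_Icc] at hi₀Icc
      have hi₀1 : 1 ≤ i₀ := hi₀Icc.1
      have hi₀eq : μ (qCoeff Q i₀ f * Q ^ i₀) = trunc μ Q f :=
        (Finset.mem_filter.mp hi₀mem).2
      have hgt : ∀ m, i₀ < m → trunc μ Q f < μ (qCoeff Q m f * Q ^ m) := by
        intro m hm
        by_cases hmN : m ≤ f.natDegree
        · refine lt_of_le_of_ne (trunc_le hμ hQm hD f m) fun h => ?_
          have hmS : m ∈ S' := Finset.mem_filter.mpr
            ⟨Finset.mem_Icc.mpr ⟨by omega, hmN⟩, h.symm⟩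
          have := Finset.le_max' S' m hmS
          omega
        · rw [qCoeff_eq_zero hQm hD m f (by omega), zero_mul, hμ.map_zero]
          exact lt_top_iff_ne_top.mpr htf
      refine ⟨fun j hj => ⟨b, hb.one_le, deriv_f_lower hμ hQ hD hb f j⟩, fun j hj => ?_⟩
      refine ⟨b * i₀, by
        have := hb.one_le
        exact Nat.one_le_iff_ne_zero.mpr (by positivity), ?_⟩
      have CA := claimA hμ hQ hD hb hf hi₀1 hi₀eq hgt
      have h2a : trunc μ Q (hasseDeriv (b * i₀) f) + i₀ • μ Q
          ≤ trunc μ Q f + i₀ • μ (hasseDeriv b Q) :=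
        le_trans (add_le_add_left (trunc_le_val hμ hQm hD _) _) CA
      have h2b := wt_nsmul_mono b h2a
      rw [smul_add, smul_add, smul_smul, smul_smul] at h2b
      have h2 : (b * i₀) • μ Q + b • trunc μ Q (hasseDeriv (b * i₀) f)
          ≤ b • trunc μ Q f + (b * i₀) • μ (hasseDeriv b Q) := by
        calc (b * i₀) • μ Q + b • trunc μ Q (hasseDeriv (b * i₀) f)
            = b • trunc μ Q (hasseDeriv (b * i₀) f) + (b * i₀) • μ Q := by abel
        _ ≤ b • trunc μ Q f + (b * i₀) • μ (hasseDeriv b Q) := h2b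
      exact wt_slope_le_trans hb.one_le hQtop hβtop (base_le hμ hb j) h2
  · -- degenerate case : `Q = 1`
    have hD0 : Q.natDegree = 0 := by omega
    have hQ1 : Q = 1 := (Polynomial.Monic.natDegree_eq_zero hQm).mp hD0
    subst hQ1
    constructor
    · intro _
      exact ⟨1, le_refl 1, by
        rw [qCoeff_one_all, zero_mul, hμ.map_zero, trunc_one hμ]⟩
    · intro _
      constructor
      · intro i hi
        refine ⟨1, le_refl 1, ?_⟩
        simp only [trunc_one hμ, one_nsmul, add_top, top_add]
        exact le_refl _
      · intro i hi
        refine ⟨1, le_refl 1, ?_⟩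
        rw [Polynomial.hasseDeriv_eq_zero_of_lt_natDegree (1 : K[X]) i
          (by rw [Polynomial.natDegree_one]; omega), hμ.map_zero]
        simp only [one_nsmul, add_top, top_add]
        exact le_top
end

section
/- Let (K̄, ν̄) be an algebraically closed valued field, a ∈ K̄, δ in the value group Φ(ν̄), and D = D(a, δ) = {x ∈ K̄ : ν̄(x - a) ≥ δ} the closed ball. For any polynomial f ∈ K̄[X], the minimum min_{x ∈ D} ν̄(f(x)) exists and equals min_{i ∈ ℕ} (ν̄(∂_i f(a)) + i·δ). In particular f ↦ min_{x∈D} ν̄(f(x)) is a valuation on K̄[X] coinciding with ν̄_{a,δ}. -/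
open Polynomial

set_option linter.unusedVariables false
set_option linter.unusedSectionVars false

section Basic
variable {L : Type*} [Field L] {Γ : Type*} [AddCommGroup Γ] [LinearOrder Γ] [IsOrderedAddMonoid Γ]
  {ν : L → WithTop Γ} (hν : IsValAdd ν)

include hν

lemma v_neg (x : L) : ν (-x) = ν x := by
  have h1 : ν (-1) + ν (-1) = 0 := by
    rw [← hν.map_mul]; norm_num; exact hν.map_one
  have h2 : ν (-1) = 0 := by
    have hne : ν (-1) ≠ ⊤ := by
      intro h; rw [h, top_add] at h1; exact absurd h1 (by simp)
    lift ν (-1) to Γ using hne with g hg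
    have hgg : g + g = 0 := by exact_mod_cast h1
    have : g = 0 := by
      rcases lt_trichotomy g 0 with hg' | hg' | hg'
      · exact absurd hgg (by intro h; have := add_lt_add hg' hg'; simp [h] at this)
      · exact hg'
      · exact absurd hgg (by intro h; have := add_lt_add hg' hg'; simp [h] at this)
    exact_mod_cast congrArg WithTop.some this
  have : ν (-x) = ν (-1 * x) := by ring_nf
  rw [this, hν.map_mul, h2, zero_add]

lemma v_sub (x y : L) : min (ν x) (ν y) ≤ ν (x - y) := by
  rw [sub_eq_add_neg, ← v_neg hν y]
  exact hν.map_add x (-y)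

lemma v_add_eq_left {u w : L} (h : ν u < ν w) : ν (u + w) = ν u := by
  refine le_antisymm ?_ ?_
  · have h2 : ν u = ν ((u + w) - w) := by ring_nf
    have := v_sub hν (u + w) w
    rw [← h2] at this
    rcases le_total (ν (u + w)) (ν w) with h3 | h3
    · simpa [min_eq_left h3] using this
    · rw [min_eq_right h3] at this; exact absurd this (not_le.mpr h)
  · have := hν.map_add u w
    simpa [min_eq_left h.le] using this

lemma v_pow_nonneg {t : L} (ht : 0 ≤ ν t) (n : ℕ) : 0 ≤ ν (t ^ n) := by
  induction n with
  | zero => simp [hν.map_one]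
  | succ n ih => rw [pow_succ, hν.map_mul]; exact add_nonneg ih ht

lemma v_pow_coe {t : L} {γ : Γ} (ht : ν t = (γ : WithTop Γ)) (n : ℕ) :
    ν (t ^ n) = ((n • γ : Γ) : WithTop Γ) := by
  induction n with
  | zero => simpa using hν.map_one
  | succ n ih =>
      rw [pow_succ, hν.map_mul, ih, ht, ← WithTop.coe_add, succ_nsmul]

lemma v_sum_le {ι : Type*} (s : Finset ι) (g : ι → L) (B : WithTop Γ)
    (h : ∀ i ∈ s, B ≤ ν (g i)) : B ≤ ν (∑ i ∈ s, g i) := by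
  induction s using Finset.cons_induction with
  | empty => simp [hν.map_zero]
  | cons a s ha ih =>
      rw [Finset.sum_cons]
      refine le_trans ?_ (hν.map_add _ _)
      exact le_min (h a (Finset.mem_cons_self a s))
        (ih fun i hi => h i (Finset.mem_cons_of_mem hi))

lemma v_multiset_prod (M : Multiset L) : ν M.prod = (M.map ν).sum := by
  induction M using Multiset.induction_on with
  | empty => simpa using hν.map_one
  | cons a M ih => rw [Multiset.prod_cons, hν.map_mul, ih, Multiset.map_cons, Multiset.sum_cons]

end Basic

noncomputable def gaussV {L : Type*} [Field L] {Γ : Type*} [AddCommGroup Γ] [LinearOrder Γ] [IsOrderedAddMonoid Γ]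
    (ν : L → WithTop Γ) (g : L[X]) : WithTop Γ :=
  (Finset.range (g.natDegree + 1)).inf fun i => ν (g.coeff i)

section Gauss
variable {L : Type*} [Field L] {Γ : Type*} [AddCommGroup Γ] [LinearOrder Γ] [IsOrderedAddMonoid Γ]
  {ν : L → WithTop Γ} (hν : IsValAdd ν)

include hν

lemma gauss_le_coeff (g : L[X]) (i : ℕ) : gaussV ν g ≤ ν (g.coeff i) := by
  by_cases h : i ≤ g.natDegree
  · exact Finset.inf_le (Finset.mem_range.mpr (Nat.lt_succ_of_le h))
  · rw [coeff_eq_zero_of_natDegree_lt (not_le.mp h), hν.map_zero]; exact le_top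

lemma gauss_le_eval (g : L[X]) {t : L} (ht : 0 ≤ ν t) : gaussV ν g ≤ ν (g.eval t) := by
  rw [eval_eq_sum_range]
  refine v_sum_le hν _ _ _ fun i _ => ?_
  rw [hν.map_mul]
  calc gaussV ν g = gaussV ν g + 0 := (add_zero _).symm
    _ ≤ ν (g.coeff i) + ν (t ^ i) :=
        add_le_add (gauss_le_coeff hν g i) (v_pow_nonneg hν ht i)

/-- coefficients of `∏ (X - r)` are bounded below by `∑ min 0 (ν r)`. -/
lemma prod_coeff_ge (M : Multiset L) (i : ℕ) :
    (M.map fun r => min 0 (ν r)).sum ≤ ν (((M.map fun r => X - C r).prod).coeff i) := by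
  induction M using Multiset.induction_on generalizing i with
  | empty =>
      simp only [Multiset.map_zero, Multiset.sum_zero, Multiset.prod_zero]
      rcases Nat.eq_zero_or_pos i with h | h
      · subst h; simp [hν.map_one]
      · rw [coeff_one, if_neg (by omega)]
        rw [hν.map_zero]; exact le_top
  | cons r M ih =>
      simp only [Multiset.map_cons, Multiset.prod_cons, Multiset.sum_cons]
      have key : ((X - C r) * (M.map fun r => X - C r).prod).coeff i =
          (X * (M.map fun r => X - C r).prod).coeff i
            + (-r) * ((M.map fun r => X - C r).prod).coeff i := by
        rw [sub_mul, coeff_sub, coeff_C_mul]; ring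
      rw [key]
      refine le_trans ?_ (hν.map_add _ _)
      refine le_min ?_ ?_
      · rcases Nat.eq_zero_or_pos i with h | h
        · subst h
          rw [coeff_zero_eq_eval_zero]
          simp only [eval_mul, eval_X, zero_mul, hν.map_zero]
          exact le_top
        · obtain ⟨j, rfl⟩ := Nat.exists_eq_succ_of_ne_zero (Nat.pos_iff_ne_zero.mp h)
          rw [coeff_X_mul]
          calc min 0 (ν r) + (M.map fun r => min 0 (ν r)).sum
              ≤ 0 + (M.map fun r => min 0 (ν r)).sum := by
                exact add_le_add_left (min_le_left _ _) _
            _ = (M.map fun r => min 0 (ν r)).sum := zero_add _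
            _ ≤ _ := ih j
      · rw [hν.map_mul, v_neg hν]
        exact add_le_add (min_le_right _ _) (ih i)

/-- a root of a monic polynomial with integral coefficients is integral. -/
lemma v_root_nonneg {p : L[X]} (hm : p.Monic)
    (hc : ∀ i < p.natDegree, 0 ≤ ν (p.coeff i)) {t : L} (ht : p.IsRoot t) : 0 ≤ ν t := by
  by_contra hlt
  push_neg at hlt
  have hne : ν t ≠ ⊤ := by intro h; rw [h] at hlt; exact absurd hlt (not_lt.mpr le_top)
  lift ν t to Γ using hne with γ hγ
  have hγ' : ν t = (γ : WithTop Γ) := hγ.symm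
  have hγ0 : γ < 0 := by exact_mod_cast hlt
  have hn1 : 1 ≤ p.natDegree := by
    by_contra h
    have h0 : p.natDegree = 0 := by omega
    have : p = 1 := (hm.natDegree_eq_zero).mp h0
    rw [IsRoot, this, eval_one] at ht
    exact one_ne_zero ht
  set n := p.natDegree with hn
  have heval := ht
  rw [IsRoot, eval_eq_sum_range, Finset.sum_range_succ, ← hn, hm.coeff_natDegree, one_mul]
    at heval
  have htn : t ^ n = -∑ i ∈ Finset.range n, p.coeff i * t ^ i := by
    linear_combination heval
  have hb : ((((n-1) • γ : Γ)) : WithTop Γ) ≤ ν (t ^ n) := by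
    rw [htn, v_neg hν]
    refine v_sum_le hν _ _ _ fun i hi => ?_
    rw [hν.map_mul, v_pow_coe hν hγ']
    have hco : 0 ≤ ν (p.coeff i) := hc i (Finset.mem_range.mp hi)
    have hsm : ((n-1) • γ : Γ) ≤ i • γ := by
      have hile : i ≤ n - 1 := by have := Finset.mem_range.mp hi; omega
      have heq : (n-1) • γ = i • γ + (n-1-i) • γ := by
        rw [← add_nsmul]; congr 1; omega
      rw [heq]
      calc i • γ + (n-1-i) • γ ≤ i • γ + 0 :=
            add_le_add_right (nsmul_nonpos hγ0.le (n-1-i)) _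
        _ = i • γ := add_zero _
    calc (((n-1) • γ : Γ) : WithTop Γ) = 0 + ((n-1) • γ : Γ) := (zero_add _).symm
      _ ≤ ν (p.coeff i) + ((i • γ : Γ) : WithTop Γ) :=
          add_le_add hco (by exact_mod_cast hsm)
  rw [v_pow_coe hν hγ'] at hb
  have hcon : (n • γ : Γ) < (n-1) • γ := by
    have heq : n • γ = (n-1) • γ + γ := by rw [← succ_nsmul]; congr 1; omega
    rw [heq]
    calc (n-1) • γ + γ < (n-1) • γ + 0 := add_lt_add_right hγ0 _
      _ = (n-1) • γ := add_zero _
  exact absurd hb (not_le.mpr (by exact_mod_cast hcon))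

/-- the key construction: a point `t` with `ν (t - r) = min 0 (ν r)` for all `r ∈ M`. -/
lemma exists_generic [IsAlgClosed L] (M : Multiset L) :
    ∃ t : L, 0 ≤ ν t ∧ ∀ r ∈ M, ν (t - r) = min 0 (ν r) := by
  classical
  set M' := M.filter (fun r => 0 ≤ ν r) with hM'
  set P : L[X] := (M'.map fun r => X - C r).prod with hP
  have hPmonic : P.Monic := monic_multiset_prod_of_monic _ _ fun r _ => monic_X_sub_C r
  set q : L[X] := X * P with hq
  have hqmonic : q.Monic := (monic_X).mul hPmonic
  have hqdeg : q.natDegree = 1 + P.natDegree := by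
    rw [hq, natDegree_mul X_ne_zero hPmonic.ne_zero, natDegree_X]
  set p : L[X] := q - C 1 with hp
  have hpdeg : p.natDegree = q.natDegree := natDegree_sub_C
  have hpmonic : p.Monic := by
    have : p.leadingCoeff = 1 := by
      rw [hp, Polynomial.leadingCoeff, hpdeg, coeff_sub, coeff_C,
        if_neg (by omega), sub_zero]
      exact hqmonic
    exact this
  obtain ⟨t, ht⟩ := IsAlgClosed.exists_root p (by
    rw [degree_eq_natDegree hpmonic.ne_zero, hpdeg, hqdeg]
    exact_mod_cast by omega)
  have hqt : q.eval t = 1 := by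
    have := ht
    rw [IsRoot, hp, eval_sub, eval_C, sub_eq_zero] at this
    exact this
  -- coefficients of P are nonneg
  have hPco : ∀ i, 0 ≤ ν (P.coeff i) := by
    intro i
    have := prod_coeff_ge hν M' i
    have hz : (M'.map fun r => min 0 (ν r)).sum = 0 := by
      apply Multiset.sum_eq_zero
      intro x hx
      obtain ⟨r, hr, rfl⟩ := Multiset.mem_map.mp hx
      have : 0 ≤ ν r := (Multiset.mem_filter.mp hr).2
      simp [min_eq_left this]
    rw [hz] at this
    exact this
  -- ν t ≥ 0 by integrality
  have hνt : 0 ≤ ν t := by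
    refine v_root_nonneg hν hpmonic (fun i hi => ?_) ht
    rw [hp, coeff_sub, coeff_C]
    rcases Nat.eq_zero_or_pos i with h0 | h0
    · subst h0
      have hq0 : q.coeff 0 = 0 := by
        rw [hq, mul_coeff_zero, coeff_X_zero, zero_mul]
      rw [hq0, if_pos rfl, zero_sub, v_neg hν, hν.map_one]
    · rw [if_neg (by omega), sub_zero, hq]
      obtain ⟨j, rfl⟩ := Nat.exists_eq_succ_of_ne_zero (Nat.pos_iff_ne_zero.mp h0)
      rw [coeff_X_mul]
      exact hPco j
  -- sum of valuations of factors is 0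
  have hsum : ν t + ((M'.map fun r => ν (t - r)).sum) = 0 := by
    have : ν (q.eval t) = 0 := by rw [hqt, hν.map_one]
    rw [hq, eval_mul, eval_X, hν.map_mul, hP, eval_multiset_prod,
      Multiset.map_map, v_multiset_prod hν, Multiset.map_map] at this
    convert this using 3
    simp [Function.comp]
  have hfac_nonneg : ∀ r ∈ M', 0 ≤ ν (t - r) := by
    intro r hr
    have hr0 : 0 ≤ ν r := (Multiset.mem_filter.mp hr).2
    refine le_trans ?_ (v_sub hν t r)
    exact le_min hνt hr0
  have hsum_nonneg : 0 ≤ (M'.map fun r => ν (t - r)).sum := by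
    refine Multiset.sum_nonneg fun x hx => ?_
    obtain ⟨r, hr, rfl⟩ := Multiset.mem_map.mp hx
    exact hfac_nonneg r hr
  have hνt0 : ν t = 0 := by
    refine le_antisymm ?_ hνt
    calc ν t = ν t + 0 := (add_zero _).symm
      _ ≤ ν t + (M'.map fun r => ν (t - r)).sum := add_le_add_right hsum_nonneg _
      _ = 0 := hsum
  have hS0 : (M'.map fun r => ν (t - r)).sum = 0 := by
    rw [hνt0, zero_add] at hsum; exact hsum
  have hfac : ∀ r ∈ M', ν (t - r) = 0 := by
    intro r hr
    have hmem : ν (t - r) ∈ M'.map fun r => ν (t - r) := Multiset.mem_map_of_mem _ hr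
    refine le_antisymm ?_ (hfac_nonneg r hr)
    have := Multiset.cons_erase hmem
    have hrest : 0 ≤ ((M'.map fun r => ν (t - r)).erase (ν (t - r))).sum := by
      refine Multiset.sum_nonneg fun x hx => ?_
      have hx' : x ∈ M'.map fun r => ν (t - r) := Multiset.mem_of_mem_erase hx
      obtain ⟨r', hr', rfl⟩ := Multiset.mem_map.mp hx'
      exact hfac_nonneg r' hr'
    calc ν (t - r) = ν (t - r) + 0 := (add_zero _).symm
      _ ≤ ν (t - r) + ((M'.map fun r => ν (t - r)).erase (ν (t - r))).sum :=
          add_le_add_right hrest _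
      _ = (M'.map fun r => ν (t - r)).sum := by rw [← Multiset.sum_cons, this]
      _ = 0 := hS0
  refine ⟨t, hνt, fun r hr => ?_⟩
  by_cases h0 : 0 ≤ ν r
  · have : r ∈ M' := Multiset.mem_filter.mpr ⟨hr, h0⟩
    rw [hfac r this, min_eq_left h0]
  · push_neg at h0
    have : ν (t - r) = ν (-r) := by
      rw [show t - r = -r + t by ring]
      exact v_add_eq_left hν (by rw [v_neg hν]; exact lt_of_lt_of_le h0 hνt)
    rw [this, v_neg hν, min_eq_right h0.le]

end Gauss

section Gauss2
variable {L : Type*} [Field L] [IsAlgClosed L] {Γ : Type*} [AddCommGroup Γ] [LinearOrder Γ] [IsOrderedAddMonoid Γ]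
  {ν : L → WithTop Γ} (hν : IsValAdd ν)

include hν

lemma v_eval_eq_gauss {f : L[X]} (hf : f ≠ 0) {t : L} (ht : 0 ≤ ν t)
    (hroot : ∀ r ∈ f.roots, ν (t - r) = min 0 (ν r)) : ν (f.eval t) = gaussV ν f := by
  have hsplit := Polynomial.Splits.eq_prod_roots
    (IsAlgClosed.splits f)
  refine le_antisymm ?_ (gauss_le_eval hν f ht)
  have heval : ν (f.eval t) = ν f.leadingCoeff + ((f.roots.map fun r => min 0 (ν r)).sum) := by
    conv_lhs => rw [hsplit]
    rw [eval_mul, eval_C, hν.map_mul, eval_multiset_prod, Multiset.map_map,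
      v_multiset_prod hν, Multiset.map_map]
    congr 1
    refine congrArg Multiset.sum (Multiset.map_congr rfl fun r hr => ?_)
    simp only [Function.comp_apply, eval_sub, eval_X, eval_C]
    exact hroot r hr
  rw [heval]
  refine Finset.le_inf fun i _ => ?_
  have hco : f.coeff i = f.leadingCoeff * ((f.roots.map fun r => X - C r).prod).coeff i := by
    conv_lhs => rw [hsplit]
    rw [coeff_C_mul]
  rw [hco, hν.map_mul]
  exact add_le_add_right (prod_coeff_ge hν f.roots i) _

lemma gauss_zero : gaussV ν (0 : L[X]) = ⊤ := by
  simp [gaussV, hν.map_zero]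

lemma exists_gauss_attained (g : L[X]) : ∃ t : L, 0 ≤ ν t ∧ ν (g.eval t) = gaussV ν g := by
  by_cases hg : g = 0
  · exact ⟨0, by rw [hν.map_zero]; exact le_top, by
      rw [hg, eval_zero, hν.map_zero, gauss_zero hν]⟩
  · obtain ⟨t, ht, hroot⟩ := exists_generic hν g.roots
    exact ⟨t, ht, v_eval_eq_gauss hν hg ht hroot⟩

lemma gauss_mul (f g : L[X]) : gaussV ν (f * g) = gaussV ν f + gaussV ν g := by
  by_cases hf : f = 0
  · rw [hf, zero_mul, gauss_zero hν, top_add]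
  by_cases hg : g = 0
  · rw [hg, mul_zero, gauss_zero hν, add_top]
  have hfg : f * g ≠ 0 := mul_ne_zero hf hg
  obtain ⟨t, ht, hroot⟩ := exists_generic hν (f * g).roots
  rw [Polynomial.roots_mul hfg] at hroot
  have h1 : ν (f.eval t) = gaussV ν f :=
    v_eval_eq_gauss hν hf ht fun r hr => hroot r (Multiset.mem_add.mpr (Or.inl hr))
  have h2 : ν (g.eval t) = gaussV ν g :=
    v_eval_eq_gauss hν hg ht fun r hr => hroot r (Multiset.mem_add.mpr (Or.inr hr))
  have h3 : ν ((f * g).eval t) = gaussV ν (f * g) :=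
    v_eval_eq_gauss hν hfg ht fun r hr => hroot r (by rw [← Polynomial.roots_mul hfg]; exact hr)
  rw [← h1, ← h2, ← h3, eval_mul, hν.map_mul]

end Gauss2


lemma coeff_comp_C_mul_X {L : Type*} [Field L] (p : L[X]) (b : L) (i : ℕ) :
    (p.comp (C b * X)).coeff i = p.coeff i * b ^ i := by
  induction p using Polynomial.induction_on' generalizing i with
  | add p q hp hq => simp [add_comp, coeff_add, hp, hq, add_mul]
  | monomial n u =>
      rw [monomial_comp, mul_pow, ← C_pow, mul_left_comm, coeff_C_mul, coeff_C_mul,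
        coeff_X_pow, coeff_monomial]
      split_ifs with h1 h2 h2
      · subst h1; ring
      · omega
      · omega
      · ring

lemma inf_range_extend {Γ : Type*} [AddCommGroup Γ] [LinearOrder Γ] [IsOrderedAddMonoid Γ] (F : ℕ → WithTop Γ)
    {n N : ℕ} (h : n ≤ N) (htop : ∀ i, n < i → F i = ⊤) :
    (Finset.range (N + 1)).inf F = (Finset.range (n + 1)).inf F := by
  refine le_antisymm (Finset.inf_mono (Finset.range_subset_range.mpr (by omega)))
    (Finset.le_inf fun i _ => ?_)
  rcases le_or_gt i n with h' | h'
  · exact Finset.inf_le (Finset.mem_range.mpr (by omega))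
  · rw [htop i h']; exact le_top

section Final
variable {L : Type*} [Field L] [IsAlgClosed L] {Γ : Type*} [AddCommGroup Γ] [LinearOrder Γ] [IsOrderedAddMonoid Γ]
  {ν : L → WithTop Γ} (hν : IsValAdd ν)

include hν

omit [IsAlgClosed L] in
lemma gauss_add (p q : L[X]) : min (gaussV ν p) (gaussV ν q) ≤ gaussV ν (p + q) := by
  refine Finset.le_inf fun i _ => ?_
  rw [coeff_add]
  refine le_trans (le_min ?_ ?_) (hν.map_add _ _)
  · exact min_le_of_left_le (gauss_le_coeff hν p i)
  · exact min_le_of_right_le (gauss_le_coeff hν q i)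

omit [IsAlgClosed L] in
lemma pairVal_eq_gauss {b : L} {δ : Γ} (hbv : ν b = (δ : WithTop Γ))
    (a : L) (f : L[X]) :
    pairVal ν a δ f = gaussV ν (f.comp (C b * X + C a)) := by
  set G := f.comp (C b * X + C a) with hG
  have hG' : G = (taylor a f).comp (C b * X) := by
    rw [hG, taylor_apply, comp_assoc]
    congr 1
    rw [add_comp, X_comp, C_comp]
  have hterm : ∀ i, ν (G.coeff i) = ν ((taylor a f).coeff i) + ((i • δ : Γ) : WithTop Γ) := by
    intro i
    rw [hG', coeff_comp_C_mul_X, hν.map_mul, v_pow_coe hν hbv]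
  set F : ℕ → WithTop Γ :=
    fun i => ν ((taylor a f).coeff i) + ((i • δ : Γ) : WithTop Γ) with hF
  have h1 : pairVal ν a δ f = (Finset.range (f.natDegree + 1)).inf F := rfl
  have h2 : gaussV ν G = (Finset.range (G.natDegree + 1)).inf F :=
    Finset.inf_congr rfl fun i _ => hterm i
  have hFtop : ∀ i, f.natDegree < i → F i = ⊤ := by
    intro i hi
    have hc : (taylor a f).coeff i = 0 :=
      coeff_eq_zero_of_natDegree_lt (by rwa [natDegree_taylor])
    show ν ((taylor a f).coeff i) + ((i • δ : Γ) : WithTop Γ) = ⊤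
    rw [hc, hν.map_zero, top_add]
  have hFtop2 : ∀ i, G.natDegree < i → F i = ⊤ := by
    intro i hi
    show ν ((taylor a f).coeff i) + ((i • δ : Γ) : WithTop Γ) = ⊤
    rw [← hterm, coeff_eq_zero_of_natDegree_lt hi, hν.map_zero]
  rw [h1, h2,
    ← inf_range_extend F (Nat.le_max_left f.natDegree G.natDegree) hFtop,
    ← inf_range_extend F (Nat.le_max_right f.natDegree G.natDegree) hFtop2]

omit [IsAlgClosed L] in
lemma pairVal_supp (a : L) (δ : Γ) (f : L[X]) (h : pairVal ν a δ f = ⊤) : f = 0 := by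
  have hall : ∀ i ∈ Finset.range (f.natDegree + 1),
      ν ((taylor a f).coeff i) + ((i • δ : Γ) : WithTop Γ) = ⊤ :=
    (Finset.inf_eq_top_iff _ _).mp h
  have hc : ∀ i, (taylor a f).coeff i = 0 := by
    intro i
    rcases le_or_gt i f.natDegree with hi | hi
    · have := hall i (Finset.mem_range.mpr (by omega))
      rcases WithTop.add_eq_top.mp this with h' | h'
      · exact hν.supp _ h'
      · exact absurd h' (WithTop.coe_ne_top)
    · exact coeff_eq_zero_of_natDegree_lt (by rwa [natDegree_taylor])
  have htf : taylor a f = 0 := Polynomial.ext fun i => by rw [hc i, coeff_zero]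
  exact taylor_injective a (by rw [htf, map_zero])

end Final

/-- on a closed ball `D(a,δ)` in an algebraically closed valued field, the
minimum `min_{x ∈ D} ν̄(f(x))` exists and equals `min_i (ν̄(∂ᵢf(a)) + i·δ)` (which is
`pairVal ν a δ f`, as `(taylor a f).coeff i = (∂ᵢ f)(a)`); in particular
`f ↦ min_{x ∈ D} ν̄(f(x))` is a valuation coinciding with `ν̄_{a,δ}`. -/
theorem ball_min_exists {L Γ : Type*} [Field L] [IsAlgClosed L] [AddCommGroup Γ] [LinearOrder Γ] [IsOrderedAddMonoid Γ]
    (ν : L → WithTop Γ) (hν : IsValAdd ν) (a : L) (δ : Γ)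
    (hδ : ∃ b : L, b ≠ 0 ∧ ν b = (δ : WithTop Γ)) (f : Polynomial L) :
    (∀ x : L, (δ : WithTop Γ) ≤ ν (x - a) → pairVal ν a δ f ≤ ν (f.eval x)) ∧
      (∃ x : L, (δ : WithTop Γ) ≤ ν (x - a) ∧ ν (f.eval x) = pairVal ν a δ f) ∧
      IsValAdd (pairVal ν a δ) := by
  obtain ⟨b, hb0, hbv⟩ := hδ
  have hPG : ∀ g : L[X], pairVal ν a δ g = gaussV ν (g.comp (C b * X + C a)) :=
    fun g => pairVal_eq_gauss hν hbv a g
  have hbinv : ν b⁻¹ = ((-δ : Γ) : WithTop Γ) := by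
    have h := hν.map_mul b b⁻¹
    rw [mul_inv_cancel₀ hb0, hν.map_one, hbv] at h
    have hne : ν b⁻¹ ≠ ⊤ := by
      intro ht; rw [ht, add_top] at h; exact absurd h.symm (by simp)
    lift ν b⁻¹ to Γ using hne with γ hγ
    have hγδ : δ + γ = 0 := by exact_mod_cast h.symm
    have : γ = -δ := eq_neg_of_add_eq_zero_right hγδ
    exact_mod_cast congrArg (fun x : Γ => (x : WithTop Γ)) this
  have heval : ∀ t : L, (f.comp (C b * X + C a)).eval t = f.eval (b * t + a) := by
    intro t; rw [eval_comp]; simp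
  refine ⟨?_, ?_, ?_, ?_, ?_, ?_, ?_⟩
  · intro x hx
    have hxt : b * ((x - a) * b⁻¹) + a = x := by field_simp; ring
    have hνt : 0 ≤ ν ((x - a) * b⁻¹) := by
      rw [hν.map_mul, hbinv]
      calc (0 : WithTop Γ) = (δ : WithTop Γ) + ((-δ : Γ) : WithTop Γ) := by
            rw [← WithTop.coe_add]; norm_num
        _ ≤ ν (x - a) + ((-δ : Γ) : WithTop Γ) := add_le_add_left hx _
    rw [hPG]
    calc gaussV ν (f.comp (C b * X + C a))
        ≤ ν ((f.comp (C b * X + C a)).eval ((x - a) * b⁻¹)) := gauss_le_eval hν _ hνt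
      _ = ν (f.eval x) := by rw [heval, hxt]
  · obtain ⟨t, ht, hval⟩ := exists_gauss_attained hν (f.comp (C b * X + C a))
    refine ⟨b * t + a, ?_, ?_⟩
    · have hba : b * t + a - a = b * t := by ring
      rw [hba, hν.map_mul, hbv]
      calc (δ : WithTop Γ) = (δ : WithTop Γ) + 0 := (add_zero _).symm
        _ ≤ (δ : WithTop Γ) + ν t := add_le_add_right ht _
    · rw [← heval, hval, hPG]
  · intro p q
    rw [hPG, hPG, hPG, mul_comp, gauss_mul hν]
  · intro p q
    rw [hPG, hPG, hPG, add_comp]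
    exact gauss_add hν _ _
  · show pairVal ν a δ 1 = 0
    rw [pairVal]
    simp [taylor_one, hν.map_one]
  · show pairVal ν a δ 0 = ⊤
    rw [pairVal]
    simp [hν.map_zero]
  · exact fun p hp => pairVal_supp hν a δ p hp
end

section
/- Let (K̄, ν̄) be an algebraically closed valued field, f ∈ K̄[X] nonconstant, and ρ ∈ Φ(ν̄). Then the diskoid D̃(f, ρ) = {x ∈ K̄ : ν̄(f(x)) ≥ ρ} is the finite union of closed balls ⋃_{c : f(c)=0} D(c, ε(c; f, ρ)), where ε(c; f, ρ) = max_{i ≥ 1} (ρ − ν̄(∂_i f(c)))/i. -/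
open Polynomial

section Helpers

variable {L : Type*} [Field L] {Γ : Type*} [AddCommGroup Γ] [LinearOrder Γ] [IsOrderedAddMonoid Γ]
  {ν : L → WithTop Γ} (hν : IsValAdd ν)
include hν

lemma IsValAdd.neg_one' : ν (-1 : L) = 0 := by
  have h := hν.map_mul (-1 : L) (-1)
  rw [neg_mul_neg, one_mul, hν.map_one] at h
  cases hg : ν (-1 : L) with
  | top => exact absurd (hν.supp _ hg) (by simp)
  | coe g =>
    rw [hg, ← WithTop.coe_add] at h
    have hg0 : g + g = 0 := (WithTop.coe_eq_zero).mp h.symm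
    have : g = 0 := by
      rcases lt_trichotomy g 0 with h1 | h1 | h1
      · exact absurd hg0 (by have := add_neg h1 h1; exact this.ne)
      · exact h1
      · exact absurd hg0 (by have := add_pos h1 h1; exact this.ne')
    rw [this]; rfl

lemma IsValAdd.neg' (a : L) : ν (-a) = ν a := by
  have : (-a : L) = -1 * a := by ring
  rw [this, hν.map_mul, hν.neg_one', zero_add]

lemma IsValAdd.pow' (a : L) : ∀ n : ℕ, 1 ≤ n → ν (a ^ n) = n • ν a := by
  intro n hn
  induction n with
  | zero => omega
  | succ k ih =>
    rcases Nat.eq_zero_or_pos k with rfl | hk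
    · simp
    · rw [pow_succ, hν.map_mul, ih hk, succ_nsmul]

lemma IsValAdd.neg_one_pow' (n : ℕ) : ν ((-1 : L) ^ n) = 0 := by
  induction n with
  | zero => simpa using hν.map_one
  | succ k ih => rw [pow_succ, hν.map_mul, ih, hν.neg_one', add_zero]

lemma IsValAdd.multiset_prod (m : Multiset L) : ν m.prod = (m.map ν).sum := by
  induction m using Multiset.induction with
  | empty => simpa using hν.map_one
  | cons a s ih => rw [Multiset.prod_cons, hν.map_mul, ih, Multiset.map_cons, Multiset.sum_cons]

lemma IsValAdd.le_multiset_sum (m : Multiset L) (γ : WithTop Γ)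
    (h : ∀ z ∈ m, γ ≤ ν z) : γ ≤ ν m.sum := by
  induction m using Multiset.induction with
  | empty => simp [hν.map_zero]
  | cons a s ih =>
    rw [Multiset.sum_cons]
    refine le_trans ?_ (hν.map_add a s.sum)
    exact le_min (h a (Multiset.mem_cons_self ..))
      (ih fun z hz => h z (Multiset.mem_cons_of_mem hz))

lemma IsValAdd.le_finset_sum {ι : Type*} (s : Finset ι) (g : ι → L) (γ : WithTop Γ)
    (h : ∀ i ∈ s, γ ≤ ν (g i)) : γ ≤ ν (∑ i ∈ s, g i) := by
  rw [Finset.sum]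
  refine hν.le_multiset_sum _ _ ?_
  intro z hz
  obtain ⟨i, hi, rfl⟩ := Multiset.mem_map.mp hz
  exact h i hi

lemma IsValAdd.lt_add_multiset_sum (w : WithTop Γ) (γ : WithTop Γ) (hγ : γ ≠ ⊤)
    (m : Multiset L) (h : ∀ z ∈ m, γ < w + ν z) : γ < w + ν m.sum := by
  induction m using Multiset.induction with
  | empty => simp [hν.map_zero, lt_top_iff_ne_top, hγ]
  | cons a s ih =>
    rw [Multiset.sum_cons]
    refine lt_of_lt_of_le ?_ (add_le_add_right (hν.map_add a s.sum) w)
    rw [← min_add_add_left]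
    exact lt_min (h a (Multiset.mem_cons_self ..))
      (ih fun z hz => h z (Multiset.mem_cons_of_mem hz))

lemma IsValAdd.ultra_eq {a b : L} (h : ν b < ν a) : ν (a + b) = ν b := by
  refine le_antisymm ?_ (by simpa [min_eq_right h.le] using hν.map_add a b)
  by_contra hlt
  push_neg at hlt
  have h2 : min (ν (a + b)) (ν a) ≤ ν b := by
    have h3 := hν.map_add (a + b) (-a)
    rw [hν.neg' a, show a + b + -a = b by ring] at h3
    exact h3
  exact absurd h2 (not_le.mpr (lt_min hlt h))

end Helpers


/-- the diskoid `D̃(f,ρ)` is the union of the closed balls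
`D(c, ε(c; f, ρ))` over the roots `c` of `f`, where
`ε(c; f, ρ) = max_{i ≥ 1} (ρ − ν̄(∂ᵢ f(c)))/i` (given here by its division-free
characterisation). -/
theorem diskoid_decomposition {L Γ : Type*} [Field L] [IsAlgClosed L]
    [AddCommGroup Γ] [LinearOrder Γ] [IsOrderedAddMonoid Γ]
    (ν : L → WithTop Γ) (hν : IsValAdd ν)
    (f : Polynomial L) (hfdeg : 0 < f.natDegree)
    (ρ : Γ) (hρ : ∃ b : L, b ≠ 0 ∧ ν b = (ρ : WithTop Γ))
    (ε : L → Γ)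
    (hε : ∀ c : L, f.eval c = 0 →
      (∀ i, 1 ≤ i →
        (ρ : WithTop Γ) ≤ ((i • ε c : Γ) : WithTop Γ) + ν ((Polynomial.hasseDeriv i f).eval c)) ∧
      (∃ i, 1 ≤ i ∧
        (ρ : WithTop Γ) = ((i • ε c : Γ) : WithTop Γ) + ν ((Polynomial.hasseDeriv i f).eval c))) :
    ∀ x : L, (ρ : WithTop Γ) ≤ ν (f.eval x) ↔
      ∃ c : L, f.eval c = 0 ∧ ((ε c : Γ) : WithTop Γ) ≤ ν (x - c) := by
  intro x
  classical
  have hf0 : f ≠ 0 := fun h => by simp [h] at hfdeg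
  have hlc : f.leadingCoeff ≠ 0 := leadingCoeff_ne_zero.mpr hf0
  constructor
  · -- forward direction
    intro hx
    by_cases hfx : f.eval x = 0
    · exact ⟨x, hfx, by rw [sub_self, hν.map_zero]; exact le_top⟩
    have hsplits : f.Splits := IsAlgClosed.splits f
    have hcard : Multiset.card f.roots = f.natDegree := splits_iff_card_roots.mp hsplits
    set R := f.roots with hR
    have hRne : R ≠ 0 := by
      intro h
      rw [h, Multiset.card_zero] at hcard
      omega
    have hRFne : R.toFinset.Nonempty := by
      obtain ⟨r, hr⟩ := Multiset.exists_mem_of_ne_zero hRne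
      exact ⟨r, Multiset.mem_toFinset.mpr hr⟩
    obtain ⟨c, hcF, hcmax⟩ := R.toFinset.exists_max_image (fun r => ν (x - r)) hRFne
    have hcR : c ∈ R := Multiset.mem_toFinset.mp hcF
    have hcroot : f.eval c = 0 := isRoot_of_mem_roots hcR
    refine ⟨c, hcroot, ?_⟩
    by_contra hlt
    push_neg at hlt
    have htne : ν (x - c) ≠ ⊤ := ne_top_of_lt hlt
    obtain ⟨t, ht⟩ := WithTop.ne_top_iff_exists.mp htne
    have htε : t < ε c := by rw [← ht] at hlt; exact_mod_cast hlt
    have hfac : f = C f.leadingCoeff * (R.map fun r => X - C r).prod :=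
      hsplits.eq_prod_roots
    set a := f.leadingCoeff with ha'
    obtain ⟨α, hα⟩ : ∃ α : Γ, ν a = (α : WithTop Γ) := by
      cases h : ν a with
      | top => exact absurd (hν.supp _ h) hlc
      | coe α => exact ⟨α, rfl⟩
    -- value of f at x via factorization
    have hevalx : ν (f.eval x) = (α : WithTop Γ) + (R.map fun r => ν (x - r)).sum := by
      conv_lhs => rw [hfac]
      rw [eval_mul, eval_C, hν.map_mul, hα, eval_multiset_prod, Multiset.map_map,
        hν.multiset_prod, Multiset.map_map]
      congr 1
      refine congrArg Multiset.sum (Multiset.map_congr rfl fun r hr => ?_)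
      simp
    have hsymm : ∀ u v : L, ν (u - v) = ν (v - u) := by
      intro u v; rw [← neg_sub v u, hν.neg']
    -- per-root min formula
    have hmin : ∀ r ∈ R, ν (x - r) = min (t : WithTop Γ) (ν (r - c)) := by
      intro r hr
      have hle : ν (x - r) ≤ (t : WithTop Γ) := by
        rw [ht]; exact hcmax r (Multiset.mem_toFinset.mpr hr)
      have hdecomp : x - r = (x - c) + (c - r) := by ring
      have hge : min (t : WithTop Γ) (ν (c - r)) ≤ ν (x - r) := by
        rw [hdecomp, ht]; exact hν.map_add _ _
      rw [hsymm r c]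
      rcases le_or_gt (t : WithTop Γ) (ν (c - r)) with h1 | h1
      · rw [min_eq_left h1] at hge ⊢
        exact le_antisymm hle hge
      · rw [min_eq_right h1.le, hdecomp]
        exact hν.ultra_eq (by rw [ht] at h1; exact h1)
    -- the hε data at c
    obtain ⟨i₀, hi₀, heq⟩ := (hε c hcroot).2
    rw [← Polynomial.taylor_coeff] at heq
    have hρtop : (ρ : WithTop Γ) ≠ ⊤ := WithTop.coe_ne_top
    have hi₀n : i₀ ≤ f.natDegree := by
      by_contra hgt
      push_neg at hgt
      have h0 : (Polynomial.taylor c f).coeff i₀ = 0 :=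
        coeff_eq_zero_of_natDegree_lt (by rwa [natDegree_taylor])
      rw [h0, hν.map_zero, add_top] at heq
      exact hρtop heq
    set D : Multiset L := R.map (fun r => r - c) with hD
    have hcD : Multiset.card D = f.natDegree := by rw [hD, Multiset.card_map, hcard]
    have htaylor : Polynomial.taylor c f = C a * (D.map fun d => X - C d).prod := by
      rw [taylor_apply]
      conv_lhs => rw [hfac]
      rw [mul_comp, C_comp, multiset_prod_comp, Multiset.map_map, hD, Multiset.map_map]
      congr 1
      refine congrArg Multiset.prod (Multiset.map_congr rfl fun r hr => ?_)
      simp only [Function.comp_apply, sub_comp, X_comp, C_comp]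
      rw [C_sub]; ring
    set k := f.natDegree - i₀ with hk
    have hcoeff : (Polynomial.taylor c f).coeff i₀ = a * ((-1 : L) ^ k * D.esymm k) := by
      rw [htaylor, coeff_C_mul, Multiset.prod_X_sub_C_coeff D (by rw [hcD]; omega), hcD]
    have hval₀ : ν ((Polynomial.taylor c f).coeff i₀) = (α : WithTop Γ) + ν (D.esymm k) := by
      rw [hcoeff, hν.map_mul, hν.map_mul, hν.neg_one_pow', hα, zero_add]
    rw [hval₀] at heq
    -- minimum sum
    set Sm : WithTop Γ := (D.map fun d => min (t : WithTop Γ) (ν d)).sum with hSm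
    have hevalx' : ν (f.eval x) = (α : WithTop Γ) + Sm := by
      rw [hevalx, hSm, hD, Multiset.map_map]
      congr 2
      exact Multiset.map_congr rfl fun r hr => hmin r hr
    have hterm : ∀ y ∈ (D.map fun d => min (t : WithTop Γ) (ν d)), y ≤ (t : WithTop Γ) := by
      intro y hy
      obtain ⟨d, hd, rfl⟩ := Multiset.mem_map.mp hy
      exact min_le_left _ _
    have hSm_le : Sm ≤ (Multiset.card D) • (t : WithTop Γ) := by
      have h := Multiset.sum_le_card_nsmul (D.map fun d => min (t : WithTop Γ) (ν d))
        (t : WithTop Γ) hterm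
      rwa [Multiset.card_map] at h
    have hSm_ne : Sm ≠ ⊤ := by
      intro h
      rw [h, top_le_iff, ← WithTop.coe_nsmul] at hSm_le
      exact WithTop.coe_ne_top hSm_le
    have hγne : (α : WithTop Γ) + Sm ≠ ⊤ := WithTop.add_ne_top.mpr ⟨WithTop.coe_ne_top, hSm_ne⟩
    have hkey : (α : WithTop Γ) + Sm < (ρ : WithTop Γ) := by
      have hρ' : (ρ : WithTop Γ)
          = (((i₀ • ε c : Γ) : WithTop Γ) + (α : WithTop Γ)) + ν (D.esymm k) := by
        rw [heq, add_assoc]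
      rw [hρ']
      refine hν.lt_add_multiset_sum _ _ hγne _ ?_
      intro z hz
      obtain ⟨S, hS, rfl⟩ := Multiset.mem_map.mp hz
      rw [Multiset.mem_powersetCard] at hS
      obtain ⟨hSle, hScard⟩ := hS
      obtain ⟨T, hT⟩ := Multiset.le_iff_exists_add.mp hSle
      have hcT : Multiset.card T = i₀ := by
        have h := congrArg Multiset.card hT
        rw [Multiset.card_add, hScard, hcD] at h
        omega
      rw [hν.multiset_prod]
      have hsplit : Sm = (S.map fun d => min (t : WithTop Γ) (ν d)).sum
          + (T.map fun d => min (t : WithTop Γ) (ν d)).sum := by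
        rw [hSm, hT, Multiset.map_add, Multiset.sum_add]
      have h1 : (S.map fun d => min (t : WithTop Γ) (ν d)).sum ≤ (S.map ν).sum :=
        Multiset.sum_map_le_sum_map _ _ fun d hd => min_le_right _ _
      have h2 : (T.map fun d => min (t : WithTop Γ) (ν d)).sum ≤ ((i₀ • t : Γ) : WithTop Γ) := by
        rw [WithTop.coe_nsmul, ← hcT]
        have h := Multiset.sum_le_card_nsmul (T.map fun d => min (t : WithTop Γ) (ν d))
          (t : WithTop Γ) ?_
        · rwa [Multiset.card_map] at h
        · intro y hy
          obtain ⟨d, hd, rfl⟩ := Multiset.mem_map.mp hy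
          exact min_le_left _ _
      by_cases hStop : (S.map ν).sum = ⊤
      · rw [hStop, add_top]
        exact lt_top_iff_ne_top.mpr hγne
      · obtain ⟨σ, hσ⟩ := WithTop.ne_top_iff_exists.mp hStop
        have hSm_lt : Sm < ((i₀ • ε c : Γ) : WithTop Γ) + (S.map ν).sum := by
          calc Sm ≤ (S.map ν).sum + ((i₀ • t : Γ) : WithTop Γ) := by
                rw [hsplit]; exact add_le_add h1 h2
            _ < (S.map ν).sum + ((i₀ • ε c : Γ) : WithTop Γ) := by
                rw [← hσ, ← WithTop.coe_add, ← WithTop.coe_add, WithTop.coe_lt_coe]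
                exact add_lt_add_right (nsmul_lt_nsmul_right (by omega) htε) σ
            _ = ((i₀ • ε c : Γ) : WithTop Γ) + (S.map ν).sum := add_comm _ _
        calc (α : WithTop Γ) + Sm
            < (α : WithTop Γ) + (((i₀ • ε c : Γ) : WithTop Γ) + (S.map ν).sum) := by
              exact WithTop.add_lt_add_left WithTop.coe_ne_top hSm_lt
          _ = (((i₀ • ε c : Γ) : WithTop Γ) + (α : WithTop Γ)) + (S.map ν).sum := by
              rw [← add_assoc, add_comm ((α : WithTop Γ)) _]
    rw [hevalx'] at hx
    exact absurd hx (not_le.mpr hkey)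
  · -- reverse direction
    rintro ⟨c, hc, hxc⟩
    have h1 : f.eval x = (Polynomial.taylor c f).eval (x - c) := (taylor_eval_sub c f x).symm
    rw [h1, eval_eq_sum_range]
    refine hν.le_finset_sum _ _ _ ?_
    intro i hi
    rcases Nat.eq_zero_or_pos i with rfl | hipos
    · rw [taylor_coeff_zero, hc, zero_mul, hν.map_zero]
      exact le_top
    · rw [hν.map_mul, Polynomial.taylor_coeff, hν.pow' (x - c) i hipos]
      calc (ρ : WithTop Γ) ≤ ((i • ε c : Γ) : WithTop Γ) + ν ((hasseDeriv i f).eval c) :=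
            (hε c hc).1 i hipos
        _ ≤ i • ν (x - c) + ν ((hasseDeriv i f).eval c) := by
            refine add_le_add_left ?_ _
            rw [WithTop.coe_nsmul]
            exact nsmul_le_nsmul_right hxc i
        _ = ν ((hasseDeriv i f).eval c) + i • ν (x - c) := add_comm _ _
end

section
/- Let L/K be an algebraic field extension. Then restriction to L gives a group isomorphism Aut_{K(X)}(L(X)) ≅ Aut_K(L), where X is transcendental over L. -/
/-! STATEMENT 18: for an algebraic field extension `L/K`, restriction to `L` gives a group
isomorphism `Aut_{K(X)}(L(X)) ≅ Aut_K(L)`.  We model `K(X)` and `L(X)` as the fraction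
fields of the polynomial rings, with `K(X) → L(X)` induced by coefficientwise extension. -/

variable (K L : Type*) [Field K] [Field L] [Algebra K L] [Algebra.IsAlgebraic K L]

/-- The coefficientwise algebra structure of `L[X]` over `K[X]`. -/
noncomputable instance polyMapAlgebra : Algebra (Polynomial K) (Polynomial L) :=
  (Polynomial.mapRingHom (algebraMap K L)).toAlgebra

instance : NoZeroSMulDivisors (Polynomial K) (FractionRing (Polynomial L)) := by
  suffices hinj : Function.Injective (algebraMap (Polynomial K) (FractionRing (Polynomial L))) from
    ⟨fun {c x} h => by
      rw [Algebra.smul_def, mul_eq_zero] at h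
      exact h.imp_left (map_eq_zero_iff _ hinj).mp⟩
  rw [IsScalarTower.algebraMap_eq (Polynomial K) (Polynomial L) (FractionRing (Polynomial L))]
  exact (IsFractionRing.injective (Polynomial L) (FractionRing (Polynomial L))).comp
    (Polynomial.map_injective _ (algebraMap K L).injective)

/-- The induced `K(X)`-algebra structure on `L(X)`. -/
noncomputable instance ratFuncAlgebra :
    Algebra (FractionRing (Polynomial K)) (FractionRing (Polynomial L)) :=
  FractionRing.liftAlgebra (Polynomial K) (FractionRing (Polynomial L))

section Aux

variable {K L}

local notation "A" => Polynomial K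
local notation "B" => Polynomial L
local notation "FA" => FractionRing (Polynomial K)
local notation "FB" => FractionRing (Polynomial L)

omit [Algebra.IsAlgebraic K L] in
private lemma st18_algebraMap_LB (x : L) :
    algebraMap L FB x = algebraMap B FB (Polynomial.C x) := by
  rw [IsScalarTower.algebraMap_apply L B FB, Polynomial.algebraMap_eq]

omit [Algebra.IsAlgebraic K L] in
private lemma st18_algebraMap_AB (q : A) :
    algebraMap A B q = q.map (algebraMap K L) := rfl

private lemma st18_fb_ext {σ σ' : FB ≃ₐ[FA] FB}
    (h : ∀ p : B, σ (algebraMap B FB p) = σ' (algebraMap B FB p)) :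
    σ = σ' := by
  have key : (σ.toRingEquiv.toRingHom : FB →+* FB) = σ'.toRingEquiv.toRingHom :=
    IsLocalization.ringHom_ext (nonZeroDivisors (Polynomial L)) (RingHom.ext h)
  exact AlgEquiv.ext fun x => RingHom.congr_fun key x

private lemma st18_liftAut_comm (τ : L ≃ₐ[K] L) (z : FA) :
    IsFractionRing.ringEquivOfRingEquiv (Polynomial.mapEquiv τ.toRingEquiv)
      (algebraMap FA FB z) = algebraMap FA FB z := by
  have key : ((IsFractionRing.ringEquivOfRingEquiv
        (Polynomial.mapEquiv τ.toRingEquiv)).toRingHom.comp (algebraMap FA FB))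
      = algebraMap FA FB := by
    refine IsLocalization.ringHom_ext (nonZeroDivisors (Polynomial K))
      (RingHom.ext fun q => ?_)
    have h1 : algebraMap A FB q = algebraMap B FB (q.map (algebraMap K L)) := by
      rw [IsScalarTower.algebraMap_apply A B FB, st18_algebraMap_AB]
    have h2 : ((q.map (algebraMap K L)).map (τ.toRingEquiv : L →+* L))
        = q.map (algebraMap K L) := by
      rw [Polynomial.map_map]
      congr 1
      ext c
      exact τ.commutes c
    simp only [RingHom.coe_comp, Function.comp_apply,
      ← IsScalarTower.algebraMap_apply A FA FB]
    rw [h1]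
    show IsFractionRing.ringEquivOfRingEquiv (Polynomial.mapEquiv τ.toRingEquiv)
      (algebraMap B FB (q.map (algebraMap K L))) = _
    rw [IsFractionRing.ringEquivOfRingEquiv_algebraMap, Polynomial.mapEquiv_apply, h2]
  exact RingHom.congr_fun key z

/-- Coefficientwise lift of a `K`-automorphism of `L` to a `K(X)`-automorphism of `L(X)`. -/
private noncomputable def st18_liftAut (τ : L ≃ₐ[K] L) : FB ≃ₐ[FA] FB :=
  AlgEquiv.ofRingEquiv (st18_liftAut_comm τ)

private lemma st18_liftAut_algebraMap (τ : L ≃ₐ[K] L) (p : B) :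
    st18_liftAut τ (algebraMap B FB p) = algebraMap B FB (p.map (τ : L →+* L)) := by
  rw [st18_liftAut, AlgEquiv.ofRingEquiv_apply, IsFractionRing.ringEquivOfRingEquiv_algebraMap,
    Polynomial.mapEquiv_apply]
  rfl

private lemma st18_liftAut_const (τ : L ≃ₐ[K] L) (x : L) :
    st18_liftAut τ (algebraMap L FB x) = algebraMap L FB (τ x) := by
  rw [st18_algebraMap_LB, st18_liftAut_algebraMap, Polynomial.map_C, ← st18_algebraMap_LB]
  rfl

private lemma st18_liftAut_mul (τ τ' : L ≃ₐ[K] L) :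
    st18_liftAut (τ * τ') = st18_liftAut τ * st18_liftAut τ' := by
  apply st18_fb_ext
  intro p
  show st18_liftAut (τ * τ') (algebraMap B FB p) = st18_liftAut τ (st18_liftAut τ' (algebraMap B FB p))
  rw [st18_liftAut_algebraMap, st18_liftAut_algebraMap, st18_liftAut_algebraMap, Polynomial.map_map]
  rfl

private lemma st18_liftAut_injective : Function.Injective (st18_liftAut (K := K) (L := L)) := by
  intro τ τ' h
  apply AlgEquiv.ext
  intro x
  apply (algebraMap L FB).injective
  rw [← st18_liftAut_const, ← st18_liftAut_const, h]

/-- An automorphism of `L(X)` over `K(X)` is in particular a `K`-algebra hom. -/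
private noncomputable def st18_toKAlgHom (σ : FB ≃ₐ[FA] FB) : FB →ₐ[K] FB :=
  { σ.toRingEquiv.toRingHom with
    commutes' := fun c => by
      have h : algebraMap K FB c = algebraMap FA FB (algebraMap A FA (Polynomial.C c)) := by
        rw [← IsScalarTower.algebraMap_apply A FA FB,
          IsScalarTower.algebraMap_apply A B FB, st18_algebraMap_AB, Polynomial.map_C,
          ← st18_algebraMap_LB, ← IsScalarTower.algebraMap_apply K L FB]
      show σ (algebraMap K FB c) = algebraMap K FB c
      rw [h]
      exact σ.commutes _ }

private lemma st18_exists_const (σ : FB ≃ₐ[FA] FB) (x : L) :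
    ∃ c : L, σ (algebraMap L FB x) = algebraMap L FB c := by
  have hx : IsIntegral K x := (Algebra.IsAlgebraic.isAlgebraic x).isIntegral
  have h1 : IsIntegral K (algebraMap L FB x) := hx.map (IsScalarTower.toAlgHom K L FB)
  have h2 : IsIntegral K (σ (algebraMap L FB x)) := h1.map (st18_toKAlgHom σ)
  have h3 : IsIntegral L (σ (algebraMap L FB x)) := h2.tower_top
  have h4 : IsIntegral B (σ (algebraMap L FB x)) := h3.tower_top
  obtain ⟨p, hp⟩ := IsIntegrallyClosed.isIntegral_iff.mp h4
  have h5 : IsIntegral L p := by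
    rw [← isIntegral_algHom_iff (IsScalarTower.toAlgHom L B FB)
      (IsFractionRing.injective (Polynomial L) FB)]
    show IsIntegral L (algebraMap B FB p)
    rw [hp]
    exact h3
  have hdeg : p.natDegree = 0 := by
    by_contra hne
    have hp0 : p ≠ 0 := fun h0 => hne (by simp [h0])
    exact p.transcendental hne
      (mem_nonZeroDivisors_of_ne_zero (Polynomial.leadingCoeff_ne_zero.mpr hp0))
      h5.isAlgebraic
  obtain ⟨c, hc⟩ := Polynomial.natDegree_eq_zero.mp hdeg
  exact ⟨c, by rw [← hp, ← hc, ← st18_algebraMap_LB]⟩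

/-- Restriction of a `K(X)`-automorphism of `L(X)` to `L`, as a `K`-algebra hom. -/
private noncomputable def st18_restrictHom (σ : FB ≃ₐ[FA] FB) : L →ₐ[K] L := by
  have spec : ∀ x : L, algebraMap L FB ((st18_exists_const σ x).choose)
      = σ (algebraMap L FB x) := fun x => ((st18_exists_const σ x).choose_spec).symm
  have inj := (algebraMap L FB).injective
  refine
  { toFun := fun x => (st18_exists_const σ x).choose
    map_one' := inj ?_
    map_mul' := fun x y => inj ?_
    map_zero' := inj ?_
    map_add' := fun x y => inj ?_
    commutes' := fun r => inj ?_ }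
  · rw [spec]; simp
  · rw [spec]; simp only [map_mul, spec]
  · rw [spec]; simp
  · rw [spec]; simp only [map_add, spec]
  · rw [spec, ← IsScalarTower.algebraMap_apply K L FB]
    exact (st18_toKAlgHom σ).commutes r

private lemma st18_restrictHom_spec (σ : FB ≃ₐ[FA] FB) (x : L) :
    algebraMap L FB (st18_restrictHom σ x) = σ (algebraMap L FB x) :=
  ((st18_exists_const σ x).choose_spec).symm

private noncomputable def st18_restrictAut (σ : FB ≃ₐ[FA] FB) : L ≃ₐ[K] L :=
  AlgEquiv.ofBijective (st18_restrictHom σ) (Algebra.IsAlgebraic.algHom_bijective _)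

private lemma st18_liftAut_restrictAut (σ : FB ≃ₐ[FA] FB) : st18_liftAut (st18_restrictAut σ) = σ := by
  apply st18_fb_ext
  intro p
  have key : (σ.toRingEquiv.toRingHom.comp (algebraMap B FB))
      = (algebraMap B FB).comp
          (Polynomial.mapRingHom ((st18_restrictAut σ : L ≃ₐ[K] L) : L →+* L)) := by
    apply Polynomial.ringHom_ext'
    · ext a
      show σ (algebraMap B FB (Polynomial.C a))
        = algebraMap B FB ((Polynomial.C a).map _)
      rw [Polynomial.map_C, ← st18_algebraMap_LB, ← st18_algebraMap_LB]
      exact (st18_restrictHom_spec σ a).symm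
    · show σ (algebraMap B FB Polynomial.X)
        = algebraMap B FB ((Polynomial.X : B).map _)
      have hX : algebraMap B FB Polynomial.X
          = algebraMap FA FB (algebraMap A FA Polynomial.X) := by
        rw [← IsScalarTower.algebraMap_apply A FA FB,
          IsScalarTower.algebraMap_apply A B FB, st18_algebraMap_AB, Polynomial.map_X]
      rw [Polynomial.map_X, hX]
      exact σ.commutes _
  have h := RingHom.congr_fun key p
  simp only [RingHom.coe_comp, Function.comp_apply, Polynomial.coe_mapRingHom] at h
  rw [st18_liftAut_algebraMap, ← h]
  rfl

end Aux
/-- restriction to `L` gives a group isomorphism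
`Aut_{K(X)}(L(X)) ≅ Aut_K(L)`. -/
theorem aut_ratFunc_equiv_aut :
    ∃ e : (FractionRing (Polynomial L) ≃ₐ[FractionRing (Polynomial K)]
            FractionRing (Polynomial L)) ≃* (L ≃ₐ[K] L),
      ∀ (σ : FractionRing (Polynomial L) ≃ₐ[FractionRing (Polynomial K)]
            FractionRing (Polynomial L)) (x : L),
        algebraMap L (FractionRing (Polynomial L)) (e σ x) =
          σ (algebraMap L (FractionRing (Polynomial L)) x) := by
  classical
  let F : (L ≃ₐ[K] L) →* (FractionRing (Polynomial L) ≃ₐ[FractionRing (Polynomial K)]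
      FractionRing (Polynomial L)) := MonoidHom.mk' st18_liftAut st18_liftAut_mul
  have hbij : Function.Bijective F :=
    ⟨st18_liftAut_injective, fun σ => ⟨st18_restrictAut σ, st18_liftAut_restrictAut σ⟩⟩
  refine ⟨(MulEquiv.ofBijective F hbij).symm, fun σ x => ?_⟩
  have h' : st18_liftAut ((MulEquiv.ofBijective F hbij).symm σ) = σ :=
    (MulEquiv.ofBijective F hbij).apply_symm_apply σ
  exact (st18_liftAut_const _ x).symm.trans (by rw [h'])
end
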